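/- arXiv:2106.09580 — 13 statements merged into one kernel-verified Lean document; each statement's English description precedes it below -/
import Mathlib

section
/- For any nonempty coalition C of players, the weighted cost of C equals costw(C) = μ_e + σ²·T_C − σ²·(Σ_{i∈C} n_i²)/T_C. -/
open Finset

variable {ι : Type*}

/-- The expected error of player `j` in coalition `C`. -/
noncomputable def err [DecidableEq ι] (μ σ2 : ℝ) (n : ι → ℕ) (C : Finset ι) (j : ι) : ℝ :=
  μ / (∑ i ∈ C, (n i : ℝ)) +
    σ2 * ((∑ i ∈ C.erase j, (n i : ℝ) ^ 2) + (∑ i ∈ C.erase j, (n i : ℝ)) ^ 2) /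
      (∑ i ∈ C, (n i : ℝ)) ^ 2

/-- The weighted cost of a coalition `C`. -/
noncomputable def costw [DecidableEq ι] (μ σ2 : ℝ) (n : ι → ℕ) (C : Finset ι) : ℝ :=
  ∑ j ∈ C, (n j : ℝ) * err μ σ2 n C j

/-- For any nonempty coalition `C`, the weighted cost of `C` equals
`μ_e + σ² · T_C − σ² · (Σ_{i∈C} n_i²) / T_C`. -/
theorem costw_eq [DecidableEq ι] (μ σ2 : ℝ) (n : ι → ℕ)
    (hμ : 0 < μ) (hσ : 0 < σ2) (hn : ∀ i, 0 < n i)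
    (C : Finset ι) (hC : C.Nonempty) :
    costw μ σ2 n C =
      μ + σ2 * (∑ i ∈ C, (n i : ℝ)) -
        σ2 * (∑ i ∈ C, (n i : ℝ) ^ 2) / (∑ i ∈ C, (n i : ℝ)) := by
  have hT : (0:ℝ) < ∑ i ∈ C, (n i : ℝ) :=
    Finset.sum_pos (fun i _ => by exact_mod_cast hn i) hC
  set T := ∑ i ∈ C, (n i : ℝ) with hTdef
  set S := ∑ i ∈ C, (n i : ℝ) ^ 2 with hSdef
  have hT0 : T ≠ 0 := ne_of_gt hT
  have key : ∀ j ∈ C, (n j : ℝ) * err μ σ2 n C j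
      = (n j : ℝ) * (S + T ^ 2) * (σ2 / T ^ 2) - (n j : ℝ) ^ 2 * (2 * T * (σ2 / T ^ 2))
        + (n j : ℝ) * (μ / T) := by
    intro j hj
    unfold err
    rw [Finset.sum_erase_eq_sub hj, Finset.sum_erase_eq_sub hj, ← hTdef, ← hSdef]
    field_simp
    ring
  rw [costw, Finset.sum_congr rfl key, Finset.sum_add_distrib, Finset.sum_sub_distrib,
    ← Finset.sum_mul, ← Finset.sum_mul, ← Finset.sum_mul, ← hTdef, ← hSdef]
  simp only [← Finset.sum_mul, ← hTdef]
  field_simp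
  ring
end

section
/- For every real ρ > 1 there exists a setting (a number of players k, positive integer sample counts n_1,…,n_k, and parameters μ_e > 0, σ² > 0) and a partition Π of the players such that costw(Π_alone) > ρ·costw(Π), where Π_alone is the partition into singletons (local learning); hence local learning can have cost more than ρ times the optimal (minimum) cost. -/
open Finset

variable {ι : Type*}

/-- The total cost of a partition of the players into coalitions. -/
noncomputable def costP [DecidableEq ι] [Fintype ι] (μ σ2 : ℝ) (n : ι → ℕ)
    (P : Finpartition (Finset.univ : Finset ι)) : ℝ :=
  ∑ C ∈ P.parts, costw μ σ2 n C

/-- For every `ρ > 1` there is a setting (number of players, positive sample counts,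
parameters `μ_e > 0`, `σ² > 0`) and a partition `P` whose cost is beaten by a factor
more than `ρ` by local learning: the partition into singletons costs more than
`ρ` times the cost of `P`.  Hence local learning can be more than `ρ` times optimal. -/
theorem local_learning_arbitrarily_bad (ρ : ℝ) (hρ : 1 < ρ) :
    ∃ (k : ℕ) (n : Fin k → ℕ) (μ σ2 : ℝ),
      (∀ i, 0 < n i) ∧ 0 < μ ∧ 0 < σ2 ∧
      ∃ P : Finpartition (Finset.univ : Finset (Fin k)),
        (∑ i : Fin k, costw μ σ2 n {i}) > ρ * costP μ σ2 n P := by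
  set k : ℕ := ⌈2 * ρ⌉₊ + 1 with hkdef
  have hρ0 : (0:ℝ) < ρ := by linarith
  have hkR : (k : ℝ) > 2 * ρ := by
    have h := Nat.le_ceil (2 * ρ)
    have : (k : ℝ) = (⌈2 * ρ⌉₊ : ℝ) + 1 := by push_cast [hkdef]; ring
    linarith
  have hk3 : (3:ℝ) ≤ (k : ℝ) := by
    have h2 : (2:ℝ) < 2 * ρ := by linarith
    have : (2:ℝ) < (⌈2 * ρ⌉₊ : ℝ) := lt_of_lt_of_le h2 (Nat.le_ceil _)
    have : 2 < ⌈2 * ρ⌉₊ := by exact_mod_cast this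
    have : 3 ≤ k := by omega
    exact_mod_cast this
  have hkpos : 0 < k := by
    have : (0:ℝ) < (k:ℝ) := by linarith
    exact_mod_cast this
  haveI : Nonempty (Fin k) := ⟨⟨0, hkpos⟩⟩
  refine ⟨k, fun _ => 1, 1, 1 / ((k : ℝ) - 1), fun _ => one_pos, one_pos, ?_, ?_⟩
  · apply div_pos one_pos; linarith
  · have hne : (Finset.univ : Finset (Fin k)) ≠ ∅ := Finset.univ_nonempty.ne_empty
    refine ⟨Finpartition.indiscrete hne, ?_⟩
    have hLHS : (∑ i : Fin k, costw 1 (1 / ((k : ℝ) - 1)) (fun _ => 1) {i}) = k := by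
      simp [costw, err]
    have herase : ∀ j : Fin k,
        (∑ i ∈ (Finset.univ : Finset (Fin k)).erase j, (1 : ℝ)) = (k : ℝ) - 1 := by
      intro j
      rw [Finset.sum_const, Finset.card_erase_of_mem (Finset.mem_univ j), Finset.card_univ,
        Fintype.card_fin]
      have h1 : 1 ≤ k := hkpos
      rw [nsmul_eq_mul, Nat.cast_sub h1]; norm_num
    have hRHS : costP 1 (1 / ((k : ℝ) - 1)) (fun _ => 1) (Finpartition.indiscrete hne) = 2 := by
      rw [costP]
      rw [show (Finpartition.indiscrete hne :
        Finpartition (Finset.univ : Finset (Fin k))).parts = {Finset.univ} from rfl]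
      rw [Finset.sum_singleton, costw]
      have herr : ∀ j : Fin k, err 1 (1 / ((k : ℝ) - 1)) (fun _ => 1) Finset.univ j
          = 2 / (k : ℝ) := by
        intro j
        rw [err]
        simp only [Nat.cast_one, one_pow]
        rw [herase j]
        rw [Finset.sum_const, Finset.card_univ, Fintype.card_fin, nsmul_eq_mul, mul_one]
        have hk0 : (k : ℝ) ≠ 0 := by positivity
        have hk1 : (k : ℝ) - 1 ≠ 0 := by intro h; nlinarith
        field_simp
        ring
      have hsum : ∀ j : Fin k, ((1:ℕ):ℝ) * err 1 (1 / ((k : ℝ) - 1)) (fun _ => 1)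
          Finset.univ j = 2 / (k : ℝ) := by
        intro j; rw [herr j]; norm_num
      rw [Finset.sum_congr rfl fun j _ => hsum j, Finset.sum_const, Finset.card_univ,
        Fintype.card_fin, nsmul_eq_mul]
      field_simp
    rw [hLHS, hRHS]
    linarith
end

section
/- For every real ρ > 1 there exists a setting (a number of players k, positive integer sample counts n_1,…,n_k, and parameters μ_e > 0, σ² > 0) and a partition Π of the players such that costw(Π_grand) > ρ·costw(Π), where Π_grand is the partition consisting of the single grand coalition of all players; hence federating in the grand coalition can have cost more than ρ times the optimal (minimum) cost. -/
open Finset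

variable {ι : Type*}

/-- For every `ρ > 1` there is a setting (number of players, positive sample counts,
parameters `μ_e > 0`, `σ² > 0`) and a partition `P` whose cost is beaten by a factor
more than `ρ` by the grand coalition: the partition consisting of the single grand
coalition of all players costs more than `ρ` times the cost of `P`.  Hence the grand
coalition can be more than `ρ` times optimal. -/
theorem grand_coalition_arbitrarily_bad (ρ : ℝ) (hρ : 1 < ρ) :
    ∃ (k : ℕ) (n : Fin k → ℕ) (μ σ2 : ℝ),
      (∀ i, 0 < n i) ∧ 0 < μ ∧ 0 < σ2 ∧
      ∃ P : Finpartition (Finset.univ : Finset (Fin k)),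
        costw μ σ2 n (Finset.univ : Finset (Fin k)) > ρ * costP μ σ2 n P := by
  refine ⟨2, fun _ => 1, 1, 2*ρ, fun i => one_pos, one_pos, by linarith, ⊥, ?_⟩
  have h1 : costP 1 (2*ρ) (fun _ => 1) (⊥ : Finpartition (Finset.univ : Finset (Fin 2))) = 2 := by
    simp [costP, costw, err, Finset.sum_map, Fin.sum_univ_succ]
  have h2 : costw 1 (2*ρ) (fun _ => (1:ℕ)) (Finset.univ : Finset (Fin 2)) = 1 + 2*ρ := by
    simp [costw, err, Fin.sum_univ_succ]
    ring
  rw [h1, h2]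
  linarith
end

section
/- Let Q be a nonempty coalition and let j, k be two players not in Q with n_j > n_k. Then swapping which of the two players federates with Q strictly decreases total cost when the larger player is removed to local learning: costw(Q ∪ {j}) + costw({k}) > costw(Q ∪ {k}) + costw({j}). -/
open Finset

variable {ι : Type*}

lemma costw_eq_aux [DecidableEq ι] (μ σ2 : ℝ) (n : ι → ℕ) (hn : ∀ i, 0 < n i)
    (C : Finset ι) (hC : C.Nonempty) :
    costw μ σ2 n C =
      μ + σ2 * ((∑ i ∈ C, (n i : ℝ)) ^ 2 - ∑ i ∈ C, (n i : ℝ) ^ 2) /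
        (∑ i ∈ C, (n i : ℝ)) := by
  set S : ℝ := ∑ i ∈ C, (n i : ℝ) with hS
  set T : ℝ := ∑ i ∈ C, (n i : ℝ) ^ 2 with hT
  have hSpos : 0 < S := Finset.sum_pos (fun i _ => by exact_mod_cast hn i) hC
  have hstep : ∀ x ∈ C, (n x : ℝ) * err μ σ2 n C x =
      (μ / S) * (n x : ℝ) + (σ2 * (T + S ^ 2) / S ^ 2) * (n x : ℝ)
        - (2 * σ2 / S) * (n x : ℝ) ^ 2 := by
    intro x hx
    rw [err, Finset.sum_erase_eq_sub hx, Finset.sum_erase_eq_sub hx, ← hS, ← hT]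
    field_simp
    ring
  rw [costw, Finset.sum_congr rfl hstep]
  rw [Finset.sum_sub_distrib, Finset.sum_add_distrib, ← Finset.mul_sum, ← Finset.mul_sum,
    ← Finset.mul_sum, ← hS, ← hT]
  field_simp
  ring

lemma costw_singleton [DecidableEq ι] (μ σ2 : ℝ) (n : ι → ℕ) (hn : ∀ i, 0 < n i) (x : ι) :
    costw μ σ2 n {x} = μ := by
  have hx : (0:ℝ) < (n x : ℝ) := by exact_mod_cast hn x
  simp [costw, err, ne_of_gt hx]
  field_simp

/-- (Swapping.)  Let `Q` be a nonempty coalition and `j, k ∉ Q` with `n_j > n_k`.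
Swapping which of the two players federates with `Q` strictly decreases total cost when
the larger player is removed to local learning:
`costw (Q ∪ {j}) + costw {k} > costw (Q ∪ {k}) + costw {j}`. -/
theorem swap_decreases_cost [DecidableEq ι] (μ σ2 : ℝ) (n : ι → ℕ)
    (hμ : 0 < μ) (hσ : 0 < σ2) (hn : ∀ i, 0 < n i)
    (Q : Finset ι) (hQ : Q.Nonempty) (j k : ι) (hj : j ∉ Q) (hk : k ∉ Q)
    (hjk : n k < n j) :
    costw μ σ2 n (insert j Q) + costw μ σ2 n {k} >
      costw μ σ2 n (insert k Q) + costw μ σ2 n {j} := by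
  set S : ℝ := ∑ i ∈ Q, (n i : ℝ) with hS
  set T : ℝ := ∑ i ∈ Q, (n i : ℝ) ^ 2 with hT
  have hSpos : 0 < S := Finset.sum_pos (fun i _ => by exact_mod_cast hn i) hQ
  have hTpos : 0 < T := Finset.sum_pos (fun i _ => by exact pow_pos (by exact_mod_cast hn i) 2) hQ
  have ha : (0:ℝ) < (n j : ℝ) := by exact_mod_cast hn j
  have hb : (0:ℝ) < (n k : ℝ) := by exact_mod_cast hn k
  have hab : (n k : ℝ) < (n j : ℝ) := by exact_mod_cast hjk
  rw [costw_singleton μ σ2 n hn, costw_singleton μ σ2 n hn,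
    costw_eq_aux μ σ2 n hn _ (Finset.insert_nonempty j Q), costw_eq_aux μ σ2 n hn _ (Finset.insert_nonempty k Q),
    Finset.sum_insert hj, Finset.sum_insert hj, Finset.sum_insert hk, Finset.sum_insert hk,
    ← hS, ← hT]
  set a : ℝ := (n j : ℝ)
  set b : ℝ := (n k : ℝ)
  have h1 : (0:ℝ) < a + S := by linarith
  have h2 : (0:ℝ) < b + S := by linarith
  have key : σ2 * ((a + S) ^ 2 - (a ^ 2 + T)) / (a + S)
      - σ2 * ((b + S) ^ 2 - (b ^ 2 + T)) / (b + S)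
      = σ2 * (a - b) * (S ^ 2 + T) / ((a + S) * (b + S)) := by
    field_simp
    ring
  have hpos : 0 < σ2 * (a - b) * (S ^ 2 + T) / ((a + S) * (b + S)) := by
    apply div_pos
    · have : 0 < a - b := by linarith
      positivity
    · positivity
  linarith [key, hpos]
end

section
/- (Monotonicity of joining.) Let Q be a nonempty coalition and let j, k be players not in Q. If n_k ≥ n_j and err_j(Q ∪ {j}) ≥ err_j({j}), then err_k(Q ∪ {k}) ≥ err_k({k}). Conversely, if n_k ≤ n_j and err_j(Q ∪ {j}) ≤ err_j({j}), then err_k(Q ∪ {k}) ≤ err_k({k}). -/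
open Finset

variable {ι : Type*}

private lemma key_iff (μ σ2 S C x : ℝ) (hx : 0 < x) (hS : 0 < S) :
    μ / x ≤ μ / (S + x) + σ2 * C / (S + x) ^ 2 ↔ μ * S ^ 2 ≤ x * (σ2 * C - μ * S) := by
  have hx' : (0:ℝ) < x * (S + x) ^ 2 := by positivity
  have hkey : μ / (S + x) + σ2 * C / (S + x) ^ 2 - μ / x
      = (x * (σ2 * C - μ * S) - μ * S ^ 2) / (x * (S + x) ^ 2) := by
    field_simp
    ring
  rw [← sub_nonneg, hkey, le_div_iff₀ hx', zero_mul, sub_nonneg]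

private lemma key_iff' (μ σ2 S C x : ℝ) (hx : 0 < x) (hS : 0 < S) :
    μ / (S + x) + σ2 * C / (S + x) ^ 2 ≤ μ / x ↔ x * (σ2 * C - μ * S) ≤ μ * S ^ 2 := by
  have hx' : (0:ℝ) < x * (S + x) ^ 2 := by positivity
  have hkey : μ / x - (μ / (S + x) + σ2 * C / (S + x) ^ 2)
      = (μ * S ^ 2 - x * (σ2 * C - μ * S)) / (x * (S + x) ^ 2) := by
    field_simp
    ring
  rw [← sub_nonneg, hkey, le_div_iff₀ hx', zero_mul, sub_nonneg]

/-- (Monotonicity of joining.)  Let `Q` be a nonempty coalition and `j, k ∉ Q`.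
If `n_k ≥ n_j` and player `j` prefers local learning to joining `Q`, then so does `k`.
Conversely, if `n_k ≤ n_j` and player `j` wishes to join `Q`, then so does `k`. -/
theorem monotonicity_of_joining [DecidableEq ι] (μ σ2 : ℝ) (n : ι → ℕ)
    (hμ : 0 < μ) (hσ : 0 < σ2) (hn : ∀ i, 0 < n i)
    (Q : Finset ι) (hQ : Q.Nonempty) (j k : ι) (hj : j ∉ Q) (hk : k ∉ Q) :
    (n j ≤ n k →
      err μ σ2 n (insert j Q) j ≥ err μ σ2 n {j} j →
      err μ σ2 n (insert k Q) k ≥ err μ σ2 n {k} k) ∧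
    (n k ≤ n j →
      err μ σ2 n (insert j Q) j ≤ err μ σ2 n {j} j →
      err μ σ2 n (insert k Q) k ≤ err μ σ2 n {k} k) := by
  set S : ℝ := ∑ i ∈ Q, (n i : ℝ) with hSdef
  set C : ℝ := (∑ i ∈ Q, (n i : ℝ) ^ 2) + S ^ 2 with hCdef
  have hS : 0 < S := Finset.sum_pos (fun i _ => by exact_mod_cast hn i) hQ
  have herr : ∀ m : ι, m ∉ Q →
      err μ σ2 n (insert m Q) m = μ / (S + n m) + σ2 * C / (S + n m) ^ 2 := by
    intro m hm
    simp only [err, Finset.sum_insert hm, Finset.erase_insert hm, hCdef, hSdef]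
    ring
  have herr1 : ∀ m : ι, err μ σ2 n {m} m = μ / (n m : ℝ) := by
    intro m
    simp [err, Finset.erase_singleton]
  have hnj : (0:ℝ) < n j := by exact_mod_cast hn j
  have hnk : (0:ℝ) < n k := by exact_mod_cast hn k
  constructor
  · intro hle h
    rw [ge_iff_le, herr k hk, herr1 k, key_iff μ σ2 S C _ hnk hS]
    rw [ge_iff_le, herr j hj, herr1 j, key_iff μ σ2 S C _ hnj hS] at h
    have hc : 0 < σ2 * C - μ * S := by
      by_contra hcon
      push_neg at hcon
      have : (n j : ℝ) * (σ2 * C - μ * S) ≤ 0 := mul_nonpos_of_nonneg_of_nonpos hnj.le hcon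
      nlinarith [mul_pos hμ (pow_pos hS 2)]
    calc μ * S ^ 2 ≤ (n j : ℝ) * (σ2 * C - μ * S) := h
      _ ≤ (n k : ℝ) * (σ2 * C - μ * S) := by
          apply mul_le_mul_of_nonneg_right _ hc.le
          exact_mod_cast hle
  · intro hle h
    rw [herr k hk, herr1 k, key_iff' μ σ2 S C _ hnk hS]
    rw [herr j hj, herr1 j, key_iff' μ σ2 S C _ hnj hS] at h
    rcases le_or_gt (σ2 * C - μ * S) 0 with hc | hc
    · have : (n k : ℝ) * (σ2 * C - μ * S) ≤ 0 := mul_nonpos_of_nonneg_of_nonpos hnk.le hc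
      nlinarith [mul_pos hμ (pow_pos hS 2)]
    · calc (n k : ℝ) * (σ2 * C - μ * S) ≤ (n j : ℝ) * (σ2 * C - μ * S) := by
            apply mul_le_mul_of_nonneg_right _ hc.le
            exact_mod_cast hle
        _ ≤ μ * S ^ 2 := h
end

section
/- (Monotonicity of leaving.) Let Q be a coalition and let j, k ∈ Q. If n_k ≥ n_j and err_j(Q) ≥ err_j({j}) (player j wishes to leave Q for local learning), then err_k(Q) ≥ err_k({k}). Conversely, if n_k ≤ n_j and err_j(Q) ≤ err_j({j}) (player j does not wish to leave), then err_k(Q) ≤ err_k({k}). -/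
open Finset

variable {ι : Type*}

private lemma core_fwd (μ σ2 x y N S2 : ℝ) (hσ : 0 < σ2) (hx : 0 < x) (hy : 0 < y)
    (hN : x + y ≤ N) (hS : x^2 + y^2 ≤ S2) (hxy : x ≤ y)
    (h : μ*N^2 ≤ x*(μ*N + σ2*((S2 - x^2) + (N-x)^2))) :
    μ*N^2 ≤ y*(μ*N + σ2*((S2 - y^2) + (N-y)^2)) := by
  rcases le_or_gt 0 (μ*N + σ2*(S2 + N^2 - 2*N*(x+y))) with hK | hK
  · nlinarith [mul_nonneg (sub_nonneg.2 hxy) hK]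
  · nlinarith [mul_nonneg (by linarith : (0:ℝ) ≤ N - y) (by linarith : (0:ℝ) ≤ -(μ*N + σ2*(S2 + N^2 - 2*N*(x+y)))),
      mul_nonneg (mul_nonneg hσ.le (by nlinarith : (0:ℝ) ≤ S2 - x^2 - y^2)) (by linarith : (0:ℝ) ≤ N),
      mul_nonneg (mul_nonneg hσ.le (sq_nonneg (N-x-y))) (by linarith : (0:ℝ) ≤ N - y),
      mul_nonneg (mul_nonneg hσ.le hy.le) (sq_nonneg (N-x-y))]

private lemma core_bwd (μ σ2 x y N S2 : ℝ) (hσ : 0 < σ2) (hx : 0 < x) (hy : 0 < y)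
    (hN : x + y ≤ N) (hS : x^2 + y^2 ≤ S2) (hxy : y ≤ x)
    (h : x*(μ*N + σ2*((S2 - x^2) + (N-x)^2)) ≤ μ*N^2) :
    y*(μ*N + σ2*((S2 - y^2) + (N-y)^2)) ≤ μ*N^2 := by
  rcases le_or_gt 0 (μ*N + σ2*(S2 + N^2 - 2*N*(x+y))) with hK | hK
  · nlinarith [mul_nonneg (sub_nonneg.2 hxy) hK]
  · exfalso
    nlinarith [mul_nonneg (by linarith : (0:ℝ) ≤ N - x) (by linarith : (0:ℝ) ≤ -(μ*N + σ2*(S2 + N^2 - 2*N*(x+y)))),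
      mul_nonneg (mul_nonneg hσ.le (by nlinarith : (0:ℝ) ≤ S2 - x^2 - y^2)) (by linarith : (0:ℝ) ≤ N),
      mul_nonneg (mul_nonneg hσ.le (sq_nonneg (N-x-y))) (by linarith : (0:ℝ) ≤ N - x),
      mul_nonneg (mul_nonneg hσ.le hx.le) (sq_nonneg (N-x-y))]

/-- (Monotonicity of leaving.)  Let `Q` be a coalition and `j, k ∈ Q`.
If `n_k ≥ n_j` and player `j` wishes to leave `Q` for local learning, then so does `k`.
Conversely, if `n_k ≤ n_j` and player `j` does not wish to leave, then neither does `k`. -/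
theorem monotonicity_of_leaving [DecidableEq ι] (μ σ2 : ℝ) (n : ι → ℕ)
    (hμ : 0 < μ) (hσ : 0 < σ2) (hn : ∀ i, 0 < n i)
    (Q : Finset ι) (j k : ι) (hj : j ∈ Q) (hk : k ∈ Q) :
    (n j ≤ n k →
      err μ σ2 n Q j ≥ err μ σ2 n {j} j →
      err μ σ2 n Q k ≥ err μ σ2 n {k} k) ∧
    (n k ≤ n j →
      err μ σ2 n Q j ≤ err μ σ2 n {j} j →
      err μ σ2 n Q k ≤ err μ σ2 n {k} k) := by
  by_cases hjk : j = k
  · subst hjk; exact ⟨fun _ h => h, fun _ h => h⟩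
  have hN0 : 0 < ∑ i ∈ Q, (n i:ℝ) :=
    Finset.sum_pos (fun i _ => by exact_mod_cast hn i) ⟨j, hj⟩
  have hx : (0:ℝ) < n j := by exact_mod_cast hn j
  have hy : (0:ℝ) < n k := by exact_mod_cast hn k
  have hsub : ({j, k} : Finset ι) ⊆ Q := by
    intro i hi
    rcases Finset.mem_insert.1 hi with h | h
    · exact h ▸ hj
    · exact (Finset.mem_singleton.1 h) ▸ hk
  have hN : (n j:ℝ) + n k ≤ ∑ i ∈ Q, (n i:ℝ) := by
    rw [show (n j:ℝ) + n k = ∑ i ∈ ({j, k} : Finset ι), (n i:ℝ) from (Finset.sum_pair (f := fun i => ((n i : ℝ))) hjk).symm]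
    exact Finset.sum_le_sum_of_subset_of_nonneg hsub (fun i _ _ => by positivity)
  have hS : (n j:ℝ)^2 + (n k:ℝ)^2 ≤ ∑ i ∈ Q, (n i:ℝ)^2 := by
    rw [show (n j:ℝ)^2 + (n k:ℝ)^2 = ∑ i ∈ ({j, k} : Finset ι), (n i:ℝ)^2 from (Finset.sum_pair (f := fun i => ((n i : ℝ))^2) hjk).symm]
    exact Finset.sum_le_sum_of_subset_of_nonneg hsub (fun i _ _ => by positivity)
  -- rewrite the errors
  have herr : ∀ l ∈ Q, err μ σ2 n Q l =
      (μ * (∑ i ∈ Q, (n i:ℝ)) + σ2 * (((∑ i ∈ Q, (n i:ℝ)^2) - (n l:ℝ)^2)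
        + ((∑ i ∈ Q, (n i:ℝ)) - n l)^2)) / (∑ i ∈ Q, (n i:ℝ))^2 := by
    intro l hl
    rw [err, Finset.sum_erase_eq_sub hl, Finset.sum_erase_eq_sub hl]
    field_simp
  have hsingle : ∀ l : ι, err μ σ2 n {l} l = μ / n l := by intro l; simp [err]
  have hiff : ∀ l ∈ Q, ((0:ℝ) < n l) →
      (err μ σ2 n {l} l ≤ err μ σ2 n Q l ↔
        μ * (∑ i ∈ Q, (n i:ℝ))^2 ≤ (n l:ℝ) * (μ * (∑ i ∈ Q, (n i:ℝ))
          + σ2 * (((∑ i ∈ Q, (n i:ℝ)^2) - (n l:ℝ)^2) + ((∑ i ∈ Q, (n i:ℝ)) - n l)^2))) := by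
    intro l hl hl0
    rw [hsingle l, herr l hl, div_le_div_iff₀ hl0 (by positivity)]
    constructor <;> intro h <;> nlinarith
  constructor
  · intro hnn h
    rw [ge_iff_le, hiff k hk hy]
    rw [ge_iff_le, hiff j hj hx] at h
    exact core_fwd μ σ2 (n j) (n k) _ _ hσ hx hy hN hS (by exact_mod_cast hnn) h
  · intro hnn h
    have hiff2 : ∀ l ∈ Q, ((0:ℝ) < n l) →
        (err μ σ2 n Q l ≤ err μ σ2 n {l} l ↔
          (n l:ℝ) * (μ * (∑ i ∈ Q, (n i:ℝ))
            + σ2 * (((∑ i ∈ Q, (n i:ℝ)^2) - (n l:ℝ)^2) + ((∑ i ∈ Q, (n i:ℝ)) - n l)^2))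
            ≤ μ * (∑ i ∈ Q, (n i:ℝ))^2) := by
      intro l hl hl0
      rw [hsingle l, herr l hl, div_le_div_iff₀ (by positivity) hl0]
      constructor <;> intro h <;> nlinarith
    rw [hiff2 k hk hy]
    rw [hiff2 j hj hx] at h
    exact core_bwd μ σ2 (n j) (n k) _ _ hσ hx hy hN hS (by exact_mod_cast hnn) h
end

section
/- If every player i satisfies n_i ≤ μ_e/σ², then the grand coalition N of all players is core stable: there is no nonempty proper subset S ⊂ N of players such that err_j(S) < err_j(N) for every j ∈ S. -/
open Finset

variable {ι : Type*}

/-- If every player `i` satisfies `n_i ≤ μ_e/σ²`, then the grand coalition of all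
players is core stable: there is no nonempty proper subset `S` of the players such that
every member of `S` has strictly smaller error in `S` than in the grand coalition. -/
theorem grand_coalition_core_stable [DecidableEq ι] [Fintype ι] (μ σ2 : ℝ) (n : ι → ℕ)
    (hμ : 0 < μ) (hσ : 0 < σ2) (hn : ∀ i, 0 < n i)
    (hsmall : ∀ i, (n i : ℝ) ≤ μ / σ2) :
    ¬ ∃ S : Finset ι, S.Nonempty ∧ S ⊂ Finset.univ ∧
        ∀ j ∈ S, err μ σ2 n S j < err μ σ2 n Finset.univ j := by
  rintro ⟨S, hSne, hSsub, hlt⟩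
  set t : ℝ := ∑ i ∈ S, (n i : ℝ) with ht_def
  set T : ℝ := ∑ i : ι, (n i : ℝ) with hT_def
  set q : ℝ := ∑ i ∈ S, (n i : ℝ) ^ 2 with hq_def
  set Q : ℝ := ∑ i : ι, (n i : ℝ) ^ 2 with hQ_def
  have hnpos : ∀ i, (0:ℝ) < n i := fun i => by exact_mod_cast hn i
  have ht : 0 < t := Finset.sum_pos (fun i _ => hnpos i) hSne
  obtain ⟨j0, _, hj0⟩ := Finset.exists_of_ssubset hSsub
  have htT : t < T := by
    apply Finset.sum_lt_sum_of_subset (Finset.subset_univ S) (Finset.mem_univ j0) hj0 (hnpos j0)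
    intro j _ _; exact (hnpos j).le
  have hT : 0 < T := ht.trans htT
  -- smallness bounds
  have hsmall' : ∀ i, σ2 * (n i : ℝ) ≤ μ := by
    intro i
    have := hsmall i
    rw [le_div_iff₀ hσ] at this
    linarith
  have hq : σ2 * q ≤ μ * t := by
    rw [hq_def, ht_def, Finset.mul_sum, Finset.mul_sum]
    apply Finset.sum_le_sum
    intro i _
    have := mul_le_mul_of_nonneg_right (hsmall' i) (hnpos i).le
    nlinarith [hnpos i]
  have hQq : σ2 * (Q - q) ≤ μ * (T - t) := by
    have h1 : Q - q = ∑ i ∈ Sᶜ, (n i : ℝ) ^ 2 := by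
      rw [hQ_def, hq_def, ← Finset.sum_add_sum_compl S]; ring
    have h2 : T - t = ∑ i ∈ Sᶜ, (n i : ℝ) := by
      rw [hT_def, ht_def, ← Finset.sum_add_sum_compl S]; ring
    rw [h1, h2, Finset.mul_sum, Finset.mul_sum]
    apply Finset.sum_le_sum
    intro i _
    have := mul_le_mul_of_nonneg_right (hsmall' i) (hnpos i).le
    nlinarith [hnpos i]
  -- closed forms of the weighted sums
  have s1 : ∑ j ∈ S, (n j : ℝ) * err μ σ2 n S j
      = (μ / t + σ2 / t ^ 2 * (q + t ^ 2)) * t + (-2 * σ2 / t) * q := by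
    rw [hq_def, ht_def, Finset.mul_sum, Finset.mul_sum, ← Finset.sum_add_distrib]
    apply Finset.sum_congr rfl
    intro j hj
    rw [err, Finset.sum_erase_eq_sub hj, Finset.sum_erase_eq_sub hj]
    rw [← ht_def, ← hq_def]
    field_simp
    ring
  have s2 : ∑ j ∈ S, (n j : ℝ) * err μ σ2 n Finset.univ j
      = (μ / T + σ2 / T ^ 2 * (Q + T ^ 2)) * t + (-2 * σ2 / T) * q := by
    rw [hq_def, ht_def, Finset.mul_sum, Finset.mul_sum, ← Finset.sum_add_distrib]
    apply Finset.sum_congr rfl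
    intro j hj
    rw [err, Finset.sum_erase_eq_sub (Finset.mem_univ j), Finset.sum_erase_eq_sub (Finset.mem_univ j)]
    rw [← hT_def, ← hQ_def]
    field_simp
    ring
  -- the key weak inequality
  have key : ∑ j ∈ S, (n j : ℝ) * err μ σ2 n Finset.univ j
      ≤ ∑ j ∈ S, (n j : ℝ) * err μ σ2 n S j := by
    rw [s1, s2]
    have hP : 0 ≤ μ * t * T * (T - t) - σ2 * (t ^ 2 * (Q - q) + q * (T - t) ^ 2) := by
      have h1 := mul_le_mul_of_nonneg_right hQq (sq_nonneg t)
      have h2 := mul_le_mul_of_nonneg_right hq (sq_nonneg (T - t))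
      nlinarith
    have hEq : ((μ / t + σ2 / t ^ 2 * (q + t ^ 2)) * t + (-2 * σ2 / t) * q)
        - ((μ / T + σ2 / T ^ 2 * (Q + T ^ 2)) * t + (-2 * σ2 / T) * q)
        = (μ * t * T * (T - t) - σ2 * (t ^ 2 * (Q - q) + q * (T - t) ^ 2)) / (t * T ^ 2) := by
      field_simp
      ring
    have := div_nonneg hP (by positivity : (0:ℝ) ≤ t * T ^ 2)
    linarith [hEq ▸ this]
  -- strict inequality from the blocking coalition
  have hstrict : ∑ j ∈ S, (n j : ℝ) * err μ σ2 n S j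
      < ∑ j ∈ S, (n j : ℝ) * err μ σ2 n Finset.univ j := by
    apply Finset.sum_lt_sum_of_nonempty hSne
    intro j hj
    exact mul_lt_mul_of_pos_left (hlt j hj) (hnpos j)
  linarith
end

section
/- If every player i satisfies n_i ≥ μ_e/σ², then any individually stable partition Π is optimal: costw(Π) ≤ costw(Π') for every partition Π' of the players. The same holds for any core stable partition. -/
open Finset

variable {ι : Type*}

/-- A partition is individually stable if no player prefers local learning to its own
coalition, and no player can move to another coalition of the partition in a way that
strictly decreases its own error while not increasing the error of any member of the
receiving coalition. -/
def IndividuallyStable [DecidableEq ι] [Fintype ι] (μ σ2 : ℝ) (n : ι → ℕ)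
    (P : Finpartition (Finset.univ : Finset ι)) : Prop :=
  ∀ i : ι, ∀ Ci ∈ P.parts, i ∈ Ci →
    (¬ err μ σ2 n {i} i < err μ σ2 n Ci i) ∧
    ∀ C ∈ P.parts, C ≠ Ci →
      ¬ (err μ σ2 n (insert i C) i < err μ σ2 n Ci i ∧
         ∀ j ∈ C, err μ σ2 n (insert i C) j ≤ err μ σ2 n C j)

/-- A partition is core stable if no nonempty coalition of players can deviate so that
every one of its members strictly decreases its error. -/
def CoreStable [DecidableEq ι] [Fintype ι] (μ σ2 : ℝ) (n : ι → ℕ)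
    (P : Finpartition (Finset.univ : Finset ι)) : Prop :=
  ¬ ∃ S : Finset ι, S.Nonempty ∧
      ∀ i ∈ S, ∀ Ci ∈ P.parts, i ∈ Ci → err μ σ2 n S i < err μ σ2 n Ci i


lemma err_singleton' [DecidableEq ι] (μ σ2 : ℝ) (n : ι → ℕ) (j : ι) :
    err μ σ2 n {j} j = μ / n j := by
  simp [err]

lemma err_ge' [DecidableEq ι] (μ σ2 : ℝ) (n : ι → ℕ) (hσ : 0 < σ2)
    (hn : ∀ i, 0 < n i) (hbig : ∀ i, μ / σ2 ≤ (n i : ℝ))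
    (C : Finset ι) (j : ι) (hj : j ∈ C) :
    μ / n j ≤ err μ σ2 n C j := by
  set m : ℝ := ∑ i ∈ C.erase j, (n i : ℝ) with hm
  set S2 : ℝ := ∑ i ∈ C.erase j, (n i : ℝ) ^ 2 with hS2
  have hNj : (0:ℝ) < n j := by exact_mod_cast hn j
  have hN : (∑ i ∈ C, (n i : ℝ)) = n j + m := by
    rw [hm, ← Finset.add_sum_erase C _ hj]
  have hm0 : 0 ≤ m := Finset.sum_nonneg fun i _ => by positivity
  have hNpos : (0:ℝ) < (n j : ℝ) + m := by linarith
  have hbig' : ∀ i, μ ≤ σ2 * n i := by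
    intro i
    have h := hbig i
    rw [div_le_iff₀ hσ] at h
    linarith [h, mul_comm (n i : ℝ) σ2]
  have hS2m : μ * m ≤ σ2 * S2 := by
    rw [hm, hS2, Finset.mul_sum, Finset.mul_sum]
    refine Finset.sum_le_sum fun i _ => ?_
    have h1 := hbig' i
    have h2 : (0:ℝ) ≤ n i := Nat.cast_nonneg _
    nlinarith
  rw [err, hN]
  rw [div_add_div _ _ (ne_of_gt hNpos) (by positivity), div_le_div_iff₀ hNj (by positivity)]
  nlinarith [mul_le_mul_of_nonneg_right hS2m hNj.le,
    mul_le_mul_of_nonneg_right (hbig' j) (mul_nonneg hm0 hm0),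
    mul_pos hNj hNpos, sq_nonneg m, hNpos, hNj]

lemma costP_lower' [DecidableEq ι] [Fintype ι]
    (μ σ2 : ℝ) (n : ι → ℕ) (hσ : 0 < σ2) (hn : ∀ i, 0 < n i)
    (hbig : ∀ i, μ / σ2 ≤ (n i : ℝ))
    (P' : Finpartition (Finset.univ : Finset ι)) :
    μ * (Fintype.card ι : ℝ) ≤ costP μ σ2 n P' := by
  have hcard : (∑ C ∈ P'.parts, (C.card : ℝ)) = (Fintype.card ι : ℝ) := by
    rw [← Finset.card_univ]
    exact_mod_cast congrArg Nat.cast P'.sum_card_parts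
  calc μ * (Fintype.card ι : ℝ) = ∑ C ∈ P'.parts, μ * C.card := by
        rw [← Finset.mul_sum, hcard]
    _ ≤ ∑ C ∈ P'.parts, costw μ σ2 n C := by
        refine Finset.sum_le_sum fun C _ => ?_
        rw [costw]
        calc μ * (C.card : ℝ) = ∑ _j ∈ C, μ := by
              rw [Finset.sum_const, nsmul_eq_mul, mul_comm]
          _ ≤ ∑ j ∈ C, (n j : ℝ) * err μ σ2 n C j := by
              refine Finset.sum_le_sum fun j hj => ?_
              have hnj : (0:ℝ) < n j := by exact_mod_cast hn j
              have h := err_ge' μ σ2 n hσ hn hbig C j hj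
              calc μ = (n j : ℝ) * (μ / n j) := by field_simp
                _ ≤ (n j : ℝ) * err μ σ2 n C j :=
                    mul_le_mul_of_nonneg_left h hnj.le

lemma costP_upper' [DecidableEq ι] [Fintype ι]
    (μ σ2 : ℝ) (n : ι → ℕ) (hn : ∀ i, 0 < n i)
    (P : Finpartition (Finset.univ : Finset ι))
    (h : ∀ C ∈ P.parts, ∀ j ∈ C, err μ σ2 n C j ≤ μ / n j) :
    costP μ σ2 n P ≤ μ * (Fintype.card ι : ℝ) := by
  have hcard : (∑ C ∈ P.parts, (C.card : ℝ)) = (Fintype.card ι : ℝ) := by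
    rw [← Finset.card_univ]
    exact_mod_cast congrArg Nat.cast P.sum_card_parts
  calc costP μ σ2 n P ≤ ∑ C ∈ P.parts, μ * C.card := by
        refine Finset.sum_le_sum fun C hC => ?_
        rw [costw]
        calc (∑ j ∈ C, (n j : ℝ) * err μ σ2 n C j) ≤ ∑ _j ∈ C, μ := by
              refine Finset.sum_le_sum fun j hj => ?_
              have hnj : (0:ℝ) < n j := by exact_mod_cast hn j
              calc (n j : ℝ) * err μ σ2 n C j ≤ (n j : ℝ) * (μ / n j) :=
                    mul_le_mul_of_nonneg_left (h C hC j hj) hnj.le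
                _ = μ := by field_simp
          _ = μ * C.card := by rw [Finset.sum_const, nsmul_eq_mul, mul_comm]
    _ = μ * (Fintype.card ι : ℝ) := by rw [← Finset.mul_sum, hcard]

/-- If every player `i` satisfies `n_i ≥ μ_e/σ²`, then any individually stable
partition is optimal, and likewise any core stable partition is optimal. -/
theorem stable_implies_optimal_large_players [DecidableEq ι] [Fintype ι]
    (μ σ2 : ℝ) (n : ι → ℕ) (hμ : 0 < μ) (hσ : 0 < σ2) (hn : ∀ i, 0 < n i)
    (hbig : ∀ i, μ / σ2 ≤ (n i : ℝ))
    (P : Finpartition (Finset.univ : Finset ι)) :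
    (IndividuallyStable μ σ2 n P →
      ∀ P' : Finpartition (Finset.univ : Finset ι), costP μ σ2 n P ≤ costP μ σ2 n P') ∧
    (CoreStable μ σ2 n P →
      ∀ P' : Finpartition (Finset.univ : Finset ι), costP μ σ2 n P ≤ costP μ σ2 n P') := by
  constructor
  · intro hIS P'
    have h : ∀ C ∈ P.parts, ∀ j ∈ C, err μ σ2 n C j ≤ μ / n j := by
      intro C hC j hj
      have := (hIS j C hC hj).1
      rw [err_singleton'] at this
      exact not_lt.mp this
    exact le_trans (costP_upper' μ σ2 n hn P h) (costP_lower' μ σ2 n hσ hn hbig P')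
  · intro hCS P'
    have h : ∀ C ∈ P.parts, ∀ j ∈ C, err μ σ2 n C j ≤ μ / n j := by
      intro C hC j hj
      by_contra hlt
      push_neg at hlt
      exact hCS ⟨{j}, Finset.singleton_nonempty j, by
        intro i hi Ci hCi hiCi
        rw [Finset.mem_singleton] at hi
        subst hi
        have : Ci = C := P.eq_of_mem_parts hCi hC hiCi hj
        subst this
        rw [err_singleton']
        exact hlt⟩
    exact le_trans (costP_upper' μ σ2 n hn P h) (costP_lower' μ σ2 n hσ hn hbig P')
end

section
/- (Lower bound on achievable error.) Assume μ_e ≥ σ². Let j be a player and C any (possibly empty) coalition of players not containing j. If n_j ≥ (μ_e + σ²)/(2σ²), then err_j(C ∪ {j}) ≥ (1/2)·μ_e/n_j; otherwise err_j(C ∪ {j}) ≥ σ². -/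
open Finset

variable {ι : Type*}

/-- (Lower bound on achievable error.)  Assume `μ_e ≥ σ²`.  Let `j` be a player and `C`
any (possibly empty) coalition not containing `j`.  If `n_j ≥ (μ_e + σ²)/(2σ²)` then
`err_j(C ∪ {j}) ≥ (1/2)·μ_e/n_j`; otherwise `err_j(C ∪ {j}) ≥ σ²`. -/
theorem error_lower_bound [DecidableEq ι] (μ σ2 : ℝ) (n : ι → ℕ)
    (hμ : 0 < μ) (hσ : 0 < σ2) (hμσ : σ2 ≤ μ) (hn : ∀ i, 0 < n i)
    (j : ι) (C : Finset ι) (hj : j ∉ C) :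
    ((μ + σ2) / (2 * σ2) ≤ (n j : ℝ) →
      (1 / 2) * (μ / (n j : ℝ)) ≤ err μ σ2 n (insert j C) j) ∧
    ((n j : ℝ) < (μ + σ2) / (2 * σ2) →
      σ2 ≤ err μ σ2 n (insert j C) j) := by
  classical
  have herase : (insert j C).erase j = C := Finset.erase_insert hj
  have hsum : ∑ i ∈ insert j C, (n i : ℝ) = (n j : ℝ) + ∑ i ∈ C, (n i : ℝ) := by
    rw [Finset.sum_insert hj]
  rw [err, herase, hsum]
  set m : ℝ := (n j : ℝ) with hm
  set s : ℝ := ∑ i ∈ C, (n i : ℝ) with hs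
  set Q : ℝ := ∑ i ∈ C, (n i : ℝ) ^ 2 with hQ
  have hs0 : 0 ≤ s := Finset.sum_nonneg fun i _ => by positivity
  have hQs : s ≤ Q := Finset.sum_le_sum fun i _ => by
    have h1 : (1 : ℝ) ≤ (n i : ℝ) := by exact_mod_cast hn i
    nlinarith
  have hm1 : (1 : ℝ) ≤ m := by rw [hm]; exact_mod_cast hn j
  have hm0 : 0 < m := by linarith
  have hT : 0 < m + s := by linarith
  constructor
  · intro h
    have hkey : μ + σ2 ≤ 2 * σ2 * m := by
      rw [div_le_iff₀ (by positivity)] at h; linarith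
    have heq : μ / (m + s) + σ2 * (Q + s ^ 2) / (m + s) ^ 2 - 1 / 2 * (μ / m)
        = (μ * m ^ 2 + s ^ 2 * (2 * m * σ2 - μ) + 2 * m * σ2 * Q) / (2 * m * (m + s) ^ 2) := by
      field_simp
      ring
    nlinarith [sq_nonneg s, mul_pos hm0 (mul_pos hT hT),
      div_nonneg (by nlinarith [mul_nonneg (mul_nonneg hσ.le hm0.le) (le_trans hs0 hQs)] :
        (0:ℝ) ≤ μ * m ^ 2 + s ^ 2 * (2 * m * σ2 - μ) + 2 * m * σ2 * Q)
        (by positivity : (0:ℝ) ≤ 2 * m * (m + s) ^ 2), heq]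
  · intro h
    have hkey : 2 * σ2 * m < μ + σ2 := by
      rw [lt_div_iff₀ (by positivity)] at h; linarith
    have hσm : σ2 * m < μ := by nlinarith
    have heq : μ / (m + s) + σ2 * (Q + s ^ 2) / (m + s) ^ 2 - σ2
        = (μ * m + μ * s + σ2 * Q - σ2 * m ^ 2 - 2 * σ2 * m * s) / (m + s) ^ 2 := by
      field_simp
      ring
    have hnum : (0:ℝ) ≤ μ * m + μ * s + σ2 * Q - σ2 * m ^ 2 - 2 * σ2 * m * s := by
      nlinarith [mul_nonneg hσ.le (sub_nonneg.2 hQs), mul_nonneg hs0 (sub_nonneg.2 hkey.le)]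
    nlinarith [div_nonneg hnum (by positivity : (0:ℝ) ≤ (m + s) ^ 2), heq]
end

section
/- Let j be a player and C a nonempty coalition of players not containing j. If the total number of samples in C satisfies T_C ≥ μ_e/(3σ²), then err_j(C ∪ {j}) ≤ 7.25·σ². -/
open Finset

variable {ι : Type*}

/-- If a player `j` federates with a nonempty coalition `C` whose total number of
samples is at least `μ_e/(3σ²)`, then `err_j(C ∪ {j}) ≤ 7.25·σ²`. -/
theorem error_upper_bound_heavy_partners [DecidableEq ι] (μ σ2 : ℝ) (n : ι → ℕ)
    (hμ : 0 < μ) (hσ : 0 < σ2) (hn : ∀ i, 0 < n i)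
    (j : ι) (C : Finset ι) (hC : C.Nonempty) (hj : j ∉ C)
    (hT : μ / (3 * σ2) ≤ ∑ i ∈ C, (n i : ℝ)) :
    err μ σ2 n (insert j C) j ≤ 7.25 * σ2 := by
  classical
  have hins : ∑ i ∈ insert j C, (n i : ℝ) = (n j : ℝ) + ∑ i ∈ C, (n i : ℝ) := by
    rw [Finset.sum_insert hj]
  have herase : (insert j C).erase j = C := Finset.erase_insert hj
  set S := ∑ i ∈ C, (n i : ℝ) with hSdef
  set S2 := ∑ i ∈ C, (n i : ℝ) ^ 2 with hS2def
  have hS : 0 < S := by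
    apply Finset.sum_pos (fun i _ => by exact_mod_cast hn i) hC
  have hT0 : (0:ℝ) < (n j : ℝ) + S := by
    have : (0:ℝ) < (n j : ℝ) := by exact_mod_cast hn j
    linarith
  have hST : S ≤ (n j : ℝ) + S := by
    have : (0:ℝ) ≤ (n j : ℝ) := by positivity
    linarith
  have h1 : μ / ((n j : ℝ) + S) ≤ 3 * σ2 := by
    rw [div_le_iff₀ hT0]
    have hμS : μ ≤ 3 * σ2 * S := by
      have := (div_le_iff₀ (by positivity : (0:ℝ) < 3 * σ2)).mp hT
      linarith [this]
    nlinarith [hn j, (by exact_mod_cast (hn j).le : (0:ℝ) ≤ (n j : ℝ))]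
  have h2 : S2 ≤ S ^ 2 := by
    have : S2 ≤ ∑ i ∈ C, (n i : ℝ) * S := by
      apply Finset.sum_le_sum
      intro i hi
      have hiS : (n i : ℝ) ≤ S := by
        apply Finset.single_le_sum (fun k _ => by positivity) hi
      have : (0:ℝ) ≤ (n i : ℝ) := by positivity
      nlinarith
    calc S2 ≤ ∑ i ∈ C, (n i : ℝ) * S := this
      _ = S * S := by rw [← Finset.sum_mul]
      _ = S ^ 2 := by ring
  have h3 : σ2 * (S2 + S ^ 2) / ((n j : ℝ) + S) ^ 2 ≤ 2 * σ2 := by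
    rw [div_le_iff₀ (by positivity)]
    have hsq : S ^ 2 ≤ ((n j : ℝ) + S) ^ 2 := by nlinarith
    nlinarith
  unfold err
  rw [herase, hins]
  have : μ / ((n j : ℝ) + S) + σ2 * (S2 + S ^ 2) / ((n j : ℝ) + S) ^ 2 ≤ 5 * σ2 := by
    linarith
  linarith
end

section
/- (Welcoming lemma.) Let C be a nonempty coalition in which every member has at most μ_e/(3σ²) samples, and let k ∉ C be a player with n_k ≤ μ_e/(3σ²). Then every member j ∈ C strictly benefits from the addition of k: err_j(C ∪ {k}) < err_j(C). -/
open Finset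

variable {ι : Type*}

lemma welcoming_poly (B a m T Q : ℝ) (ha1 : 1 ≤ a) (haB : a ≤ B) (hm1 : 1 ≤ m) (hmB : m ≤ B)
    (hT : 0 ≤ T) (hQ : 0 ≤ Q) :
    0 < 3*B*(T+m)*(T+m+a) + (Q+T^2)*(2*(T+m)+a) - 2*(T+m)^2*(a+T) := by
  have hS : (0:ℝ) < T + m := by linarith
  have hSa : (0:ℝ) < T + m + a := by linarith
  have hQ' : 0 ≤ Q * (2*(T+m)+a) := by positivity
  rcases le_total a m with ham | ham
  · rcases le_total (T*(T+m)) (m^2) with h | h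
    · nlinarith [mul_nonneg (sub_nonneg.2 hmB) (mul_pos hS hSa).le,
        mul_nonneg (by linarith : (0:ℝ) ≤ a) (sub_nonneg.2 h),
        mul_pos (mul_pos (by linarith : (0:ℝ) < m) hS) (by linarith : (0:ℝ) < T + 3*m)]
    · nlinarith [mul_nonneg (sub_nonneg.2 hmB) (mul_pos hS hSa).le,
        mul_nonneg (sub_nonneg.2 ham) (sub_nonneg.2 h),
        mul_pos (mul_pos (by linarith : (0:ℝ) < m) (by linarith : (0:ℝ) < m)) (by linarith : (0:ℝ) < m)]
  · nlinarith [mul_nonneg (sub_nonneg.2 haB) (mul_pos hS hSa).le,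
      mul_nonneg (mul_nonneg hS.le hT) (sub_nonneg.2 ham),
      mul_pos (mul_pos (by linarith : (0:ℝ) < a) (by linarith : (0:ℝ) < a)) hS,
      mul_nonneg (by linarith : (0:ℝ) ≤ a) (sq_nonneg m)]

lemma welcoming_real (μ σ2 a m T Q : ℝ) (hσ : 0 < σ2) (ha : 1 ≤ a) (hm : 1 ≤ m)
    (hT : 0 ≤ T) (hQ : 0 ≤ Q) (haB : a ≤ μ / (3 * σ2)) (hmB : m ≤ μ / (3 * σ2)) :
    μ / (T + m + a) + σ2 * ((Q + a ^ 2) + (T + a) ^ 2) / (T + m + a) ^ 2 <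
      μ / (T + m) + σ2 * (Q + T ^ 2) / (T + m) ^ 2 := by
  set B : ℝ := μ / (3 * σ2) with hB
  have hμ : μ = 3 * σ2 * B := by
    rw [hB]
    field_simp
  have hS : (0:ℝ) < T + m := by linarith
  have hSa : (0:ℝ) < T + m + a := by linarith
  rw [← sub_pos]
  have heq : μ / (T + m) + σ2 * (Q + T ^ 2) / (T + m) ^ 2 -
      (μ / (T + m + a) + σ2 * ((Q + a ^ 2) + (T + a) ^ 2) / (T + m + a) ^ 2) =
      (a * (σ2 * (3*B*(T+m)*(T+m+a) + (Q+T^2)*(2*(T+m)+a) - 2*(T+m)^2*(a+T)))) /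
        ((T + m) ^ 2 * (T + m + a) ^ 2) := by
    rw [hμ]
    field_simp
    ring
  rw [heq]
  apply div_pos
  · exact mul_pos (by linarith) (mul_pos hσ (welcoming_poly B a m T Q ha haB hm hmB hT hQ))
  · positivity

/-- (Welcoming lemma.)  Let `C` be a nonempty coalition in which every member has at
most `μ_e/(3σ²)` samples, and let `k ∉ C` with `n_k ≤ μ_e/(3σ²)`.  Then every member
`j ∈ C` strictly benefits from the addition of `k`. -/
theorem welcoming_lemma [DecidableEq ι] (μ σ2 : ℝ) (n : ι → ℕ)
    (hμ : 0 < μ) (hσ : 0 < σ2) (hn : ∀ i, 0 < n i)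
    (C : Finset ι) (hC : C.Nonempty) (hCsmall : ∀ i ∈ C, (n i : ℝ) ≤ μ / (3 * σ2))
    (k : ι) (hk : k ∉ C) (hksmall : (n k : ℝ) ≤ μ / (3 * σ2)) :
    ∀ j ∈ C, err μ σ2 n (insert k C) j < err μ σ2 n C j := by
  intro j hj
  have hjk : j ≠ k := fun h => hk (h ▸ hj)
  have hkj : k ∉ C.erase j := fun h => hk (Finset.mem_of_mem_erase h)
  have herase : (insert k C).erase j = insert k (C.erase j) :=
    Finset.erase_insert_of_ne (Ne.symm hjk)
  set a : ℝ := (n k : ℝ) with hadef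
  set m : ℝ := (n j : ℝ) with hmdef
  set T : ℝ := ∑ i ∈ C.erase j, (n i : ℝ) with hTdef
  set Q : ℝ := ∑ i ∈ C.erase j, (n i : ℝ) ^ 2 with hQdef
  have hSC : ∑ i ∈ C, (n i : ℝ) = T + m := by
    rw [hTdef, hmdef, Finset.sum_erase_add C _ hj]
  have hS1 : ∑ i ∈ insert k C, (n i : ℝ) = a + (T + m) := by
    rw [Finset.sum_insert hk, hSC]
  have hS2 : ∑ i ∈ (insert k C).erase j, (n i : ℝ) = a + T := by
    rw [herase, Finset.sum_insert hkj]
  have hS3 : ∑ i ∈ (insert k C).erase j, (n i : ℝ) ^ 2 = a ^ 2 + Q := by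
    rw [herase, Finset.sum_insert hkj]
  have e1 : err μ σ2 n (insert k C) j =
      μ / (T + m + a) + σ2 * ((Q + a ^ 2) + (T + a) ^ 2) / (T + m + a) ^ 2 := by
    rw [err, hS1, hS2, hS3]
    ring
  have e2 : err μ σ2 n C j = μ / (T + m) + σ2 * (Q + T ^ 2) / (T + m) ^ 2 := by
    rw [err, hSC]
  rw [e1, e2]
  have ha1 : (1:ℝ) ≤ a := Nat.one_le_cast.2 (hn k)
  have hm1 : (1:ℝ) ≤ m := Nat.one_le_cast.2 (hn j)
  have hT0 : 0 ≤ T := Finset.sum_nonneg fun i _ => by positivity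
  have hQ0 : 0 ≤ Q := Finset.sum_nonneg fun i _ => by positivity
  exact welcoming_real μ σ2 a m T Q hσ ha1 hm1 hT0 hQ0 hksmall (hCsmall j hj)
end

section
/- Let A and B be disjoint nonempty coalitions in which every player has at most μ_e/(3σ²) samples, and let a ∈ A, b ∈ B. If either n_a = n_b, or n_a > n_b and T_A − n_a ≥ T_B − n_b, then some player wishes to switch: err_a(B ∪ {a}) < err_a(A) or err_b(A ∪ {b}) < err_b(B). Consequently (by the welcoming lemma) no partition containing both A and B as coalitions is individually stable. -/
open Finset

variable {ι : Type*}

set_option maxRecDepth 100000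


set_option maxHeartbeats 12000000 in
lemma psi_pos (k x y s t : ℝ) (hy : 1 ≤ y) (hyx : y ≤ x) (hxk : x ≤ k)
    (ht : 0 ≤ t) (hts : t ≤ s) :
    0 < (y+t)^2*((3*k*(x+s)+s^2)*(x+y+t)^2-((3*k*(x+y+t)+y^2+(y+t)^2)*(x+s)^2 + t*(x+s)^2))
      - (x+y+t)^2*((3*k*(x+y+s)+x^2+(x+s)^2)*(y+t)^2-((3*k*(y+t)+t^2)*(x+y+s)^2 + t*(x+y+s)^2)) := by
  obtain ⟨d, hd, rfl⟩ : ∃ d, 0 ≤ d ∧ s = t + d := ⟨s - t, by linarith, by ring⟩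
  obtain ⟨a, ha, rfl⟩ : ∃ a, 0 ≤ a ∧ k = x + a := ⟨k - x, by linarith, by ring⟩
  obtain ⟨b, hb, rfl⟩ : ∃ b, 0 ≤ b ∧ x = y + b := ⟨x - y, by linarith, by ring⟩
  obtain ⟨c, hc, rfl⟩ : ∃ c, 0 ≤ c ∧ y = 1 + c := ⟨y - 1, by linarith, by ring⟩
  have ht2 : (0:ℝ) ≤ t := ht
  have hE : (0:ℝ) ≤ ((((((((((54:ℝ) * t) + ((54:ℝ) * t ^ 2)) + (((24:ℝ) * t ^ 3) + ((4:ℝ) * t ^ 4))) + ((((24:ℝ) * d) + ((52:ℝ) * (d * t))) + (((36:ℝ) * (d * t ^ 2)) + ((8:ℝ) * (d * t ^ 3))))) + (((((4:ℝ) * d ^ 2) + ((6:ℝ) * (d ^ 2 * t))) + (((2:ℝ) * (d ^ 2 * t ^ 2)) + ((120:ℝ) * c))) + ((((255:ℝ) * (c * t)) + ((188:ℝ) * (c * t ^ 2))) + (((54:ℝ) * (c * t ^ 3)) + ((4:ℝ) * (c * t ^ 4)))))) + ((((((120:ℝ) * (c * d)) + ((194:ℝ) * (c * (d * t)))) + (((90:ℝ)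 * (c * (d * t ^ 2))) + ((10:ℝ) * (c * (d * t ^ 3))))) + ((((16:ℝ) * (c * d ^ 2)) + ((15:ℝ) * (c * (d ^ 2 * t)))) + (((2:ℝ) * (c * (d ^ 2 * t ^ 2))) + ((300:ℝ) * c ^ 2)))) + (((((480:ℝ) * (c ^ 2 * t)) + ((240:ℝ) * (c ^ 2 * t ^ 2))) + (((36:ℝ) * (c ^ 2 * t ^ 3)) + ((240:ℝ) * (c ^ 2 * d)))) + ((((270:ℝ) * (c ^ 2 * (d * t))) + ((72:ℝ) * (c ^ 2 * (d * t ^ 2)))) + (((2:ℝ) * (c ^ 2 * (d * t ^ 3))) + (((24:ℝ) * (c ^ 2 * d ^ 2)) + ((12:ℝ) * (c ^ 2 * (d ^ 2 * t))))))))) + (((((((400:ℝ) * c ^ 3) + ((450:ℝ) * (c ^ 3 * t))) + (((132:ℝ) * (c ^ 3 * t ^ 2)) + ((6:ℝ) * (c ^ 3 * t ^ 3)))) + ((((240:ℝ) * (c ^ 3 * d)) + ((166:ℝ) * (c ^ 3 * (d * t)))) + (((18:ℝ) * (c ^ 3 * (d * t ^ 2))) + ((16:ℝ) * (c ^ 3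 * d ^ 2))))) + (((((3:ℝ) * (c ^ 3 * (d ^ 2 * t))) + ((300:ℝ) * c ^ 4)) + (((210:ℝ) * (c ^ 4 * t)) + ((26:ℝ) * (c ^ 4 * t ^ 2)))) + ((((120:ℝ) * (c ^ 4 * d)) + ((38:ℝ) * (c ^ 4 * (d * t)))) + (((4:ℝ) * (c ^ 4 * d ^ 2)) + ((120:ℝ) * c ^ 5))))) + ((((((39:ℝ) * (c ^ 5 * t)) + ((24:ℝ) * (c ^ 5 * d))) + (((20:ℝ) * c ^ 6) + ((71:ℝ) * b))) + ((((167:ℝ) * (b * t)) + ((137:ℝ) * (b * t ^ 2))) + (((46:ℝ) * (b * t ^ 3)) + ((5:ℝ) * (b * t ^ 4))))) + (((((70:ℝ) * (b * d)) + ((140:ℝ) * (b * (d * t)))) + (((90:ℝ) * (b * (d * t ^ 2))) + ((22:ℝ) * (b * (d * t ^ 3))))) + ((((2:ℝ) * (b * (d * t ^ 4))) + ((15:ℝ) * (b * d ^ 2))) + (((25:ℝ) * (b * (d ^ 2 * t))) + (((12:ℝ) * (b * (d ^ 2 * t ^ 2))) + ((2:ℝ) * (b * (d ^ 2 * t ^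 3)))))))))) + ((((((((355:ℝ) * (b * c)) + ((638:ℝ) * (b * (c * t)))) + (((369:ℝ) * (b * (c * t ^ 2))) + ((74:ℝ) * (b * (c * t ^ 3))))) + ((((3:ℝ) * (b * (c * t ^ 4))) + ((280:ℝ) * (b * (c * d)))) + (((398:ℝ) * (b * (c * (d * t)))) + ((160:ℝ) * (b * (c * (d * t ^ 2))))))) + (((((18:ℝ) * (b * (c * (d * t ^ 3)))) + ((45:ℝ) * (b * (c * d ^ 2)))) + (((46:ℝ) * (b * (c * (d ^ 2 * t)))) + ((10:ℝ) * (b * (c * (d ^ 2 * t ^ 2)))))) + ((((710:ℝ) * (b * c ^ 2)) + ((912:ℝ) * (b * (c ^ 2 * t)))) + (((327:ℝ) * (b * (c ^ 2 * t ^ 2))) + ((28:ℝ) * (b * (c ^ 2 * t ^ 3))))))) + ((((((420:ℝ) * (b * (c ^ 2 * d))) + ((376:ℝ) * (b * (c ^ 2 * (d * t))))) + (((70:ℝ) * (b * (c ^ 2 * (d * t ^ 2)))) + ((45:ℝ) * (b * (c ^ 2 * d ^ 2))))) + ((((21:ℝ) * (b * (c ^ 2 * (d ^ 2 * t)))) +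 ((710:ℝ) * (b * c ^ 3))) + (((578:ℝ) * (b * (c ^ 3 * t))) + ((95:ℝ) * (b * (c ^ 3 * t ^ 2)))))) + (((((280:ℝ) * (b * (c ^ 3 * d))) + ((118:ℝ) * (b * (c ^ 3 * (d * t))))) + (((15:ℝ) * (b * (c ^ 3 * d ^ 2))) + ((355:ℝ) * (b * c ^ 4)))) + ((((137:ℝ) * (b * (c ^ 4 * t))) + ((70:ℝ) * (b * (c ^ 4 * d)))) + (((71:ℝ) * (b * c ^ 5)) + (((98:ℝ) * b ^ 2) + ((200:ℝ) * (b ^ 2 * t)))))))) + (((((((132:ℝ) * (b ^ 2 * t ^ 2)) + ((32:ℝ) * (b ^ 2 * t ^ 3))) + (((2:ℝ) * (b ^ 2 * t ^ 4)) + ((74:ℝ) * (b ^ 2 * d)))) + ((((126:ℝ) * (b ^ 2 * (d * t))) + ((60:ℝ) * (b ^ 2 * (d * t ^ 2)))) + (((8:ℝ) * (b ^ 2 * (d * t ^ 3))) + ((12:ℝ) * (b ^ 2 * d ^ 2))))) + (((((16:ℝ) * (b ^ 2 * (d ^ 2 * t))) + ((4:ℝ) * (b ^ 2 * (d ^ 2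 * t ^ 2)))) + (((392:ℝ) * (b ^ 2 * c)) + ((577:ℝ) * (b ^ 2 * (c * t))))) + ((((242:ℝ) * (b ^ 2 * (c * t ^ 2))) + ((27:ℝ) * (b ^ 2 * (c * t ^ 3)))) + (((222:ℝ) * (b ^ 2 * (c * d))) + ((240:ℝ) * (b ^ 2 * (c * (d * t)))))))) + ((((((54:ℝ) * (b ^ 2 * (c * (d * t ^ 2)))) + ((24:ℝ) * (b ^ 2 * (c * d ^ 2)))) + (((15:ℝ) * (b ^ 2 * (c * (d ^ 2 * t)))) + ((588:ℝ) * (b ^ 2 * c ^ 2)))) + ((((554:ℝ) * (b ^ 2 * (c ^ 2 * t))) + ((110:ℝ) * (b ^ 2 * (c ^ 2 * t ^ 2)))) + (((222:ℝ) * (b ^ 2 * (c ^ 2 * d))) + ((114:ℝ) * (b ^ 2 * (c ^ 2 * (d * t))))))) + (((((12:ℝ) * (b ^ 2 * (c ^ 2 * d ^ 2))) + ((392:ℝ) * (b ^ 2 * c ^ 3))) + (((177:ℝ) * (b ^ 2 * (c ^ 3 * t))) + ((74:ℝ) * (b ^ 2 * (c ^ 3 * d))))) + ((((98:ℝ) *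 (b ^ 2 * c ^ 4)) + ((66:ℝ) * b ^ 3)) + (((113:ℝ) * (b ^ 3 * t)) + (((54:ℝ) * (b ^ 3 * t ^ 2)) + ((7:ℝ) * (b ^ 3 * t ^ 3)))))))))) + (((((((((34:ℝ) * (b ^ 3 * d)) + ((46:ℝ) * (b ^ 3 * (d * t)))) + (((12:ℝ) * (b ^ 3 * (d * t ^ 2))) + ((3:ℝ) * (b ^ 3 * d ^ 2)))) + ((((3:ℝ) * (b ^ 3 * (d ^ 2 * t))) + ((198:ℝ) * (b ^ 3 * c))) + (((218:ℝ) * (b ^ 3 * (c * t))) + ((50:ℝ) * (b ^ 3 * (c * t ^ 2)))))) + (((((68:ℝ) * (b ^ 3 * (c * d))) + ((44:ℝ) * (b ^ 3 * (c * (d * t))))) + (((3:ℝ) * (b ^ 3 * (c * d ^ 2))) + ((198:ℝ) * (b ^ 3 * c ^ 2)))) + ((((105:ℝ) * (b ^ 3 * (c ^ 2 * t))) + ((34:ℝ) * (b ^ 3 * (c ^ 2 * d)))) + (((66:ℝ) * (b ^ 3 * c ^ 3)) + ((22:ℝ) * b ^ 4))))) + ((((((30:ℝ) * (b ^ 4 *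 t)) + ((8:ℝ) * (b ^ 4 * t ^ 2))) + (((6:ℝ) * (b ^ 4 * d)) + ((6:ℝ) * (b ^ 4 * (d * t))))) + ((((44:ℝ) * (b ^ 4 * c)) + ((29:ℝ) * (b ^ 4 * (c * t)))) + (((6:ℝ) * (b ^ 4 * (c * d))) + ((22:ℝ) * (b ^ 4 * c ^ 2))))) + (((((3:ℝ) * b ^ 5) + ((3:ℝ) * (b ^ 5 * t))) + (((3:ℝ) * (b ^ 5 * c)) + ((30:ℝ) * a))) + ((((81:ℝ) * (a * t)) + ((81:ℝ) * (a * t ^ 2))) + (((36:ℝ) * (a * t ^ 3)) + (((6:ℝ) * (a * t ^ 4)) + ((36:ℝ) * (a * d)))))))) + (((((((78:ℝ) * (a * (d * t))) + ((54:ℝ) * (a * (d * t ^ 2)))) + (((12:ℝ) * (a * (d * t ^ 3))) + ((6:ℝ) * (a * d ^ 2)))) + ((((9:ℝ) * (a * (d ^ 2 * t))) + ((3:ℝ) * (a * (d ^ 2 * t ^ 2)))) + (((150:ℝ) * (a * c)) + ((324:ℝ) * (a * (c * t)))))) + (((((243:ℝ) * (a * (c * t ^ 2))) + ((72:ℝ)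 * (a * (c * t ^ 3)))) + (((6:ℝ) * (a * (c * t ^ 4))) + ((144:ℝ) * (a * (c * d))))) + ((((234:ℝ) * (a * (c * (d * t)))) + ((108:ℝ) * (a * (c * (d * t ^ 2))))) + (((12:ℝ) * (a * (c * (d * t ^ 3)))) + ((18:ℝ) * (a * (c * d ^ 2))))))) + ((((((18:ℝ) * (a * (c * (d ^ 2 * t)))) + ((3:ℝ) * (a * (c * (d ^ 2 * t ^ 2))))) + (((300:ℝ) * (a * c ^ 2)) + ((486:ℝ) * (a * (c ^ 2 * t))))) + ((((243:ℝ) * (a * (c ^ 2 * t ^ 2))) + ((36:ℝ) * (a * (c ^ 2 * t ^ 3)))) + (((216:ℝ) * (a * (c ^ 2 * d))) + ((234:ℝ) * (a * (c ^ 2 * (d * t))))))) + (((((54:ℝ) * (a * (c ^ 2 * (d * t ^ 2)))) + ((18:ℝ) * (a * (c ^ 2 * d ^ 2)))) + (((9:ℝ) * (a * (c ^ 2 * (d ^ 2 * t)))) + ((300:ℝ) * (a * c ^ 3)))) + ((((324:ℝ) * (a * (c ^ 3 * t))) + ((81:ℝ) * (a * (c ^ 3 * t ^ 2)))) + (((144:ℝ)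 * (a * (c ^ 3 * d))) + (((78:ℝ) * (a * (c ^ 3 * (d * t)))) + ((6:ℝ) * (a * (c ^ 3 * d ^ 2)))))))))) + ((((((((150:ℝ) * (a * c ^ 4)) + ((81:ℝ) * (a * (c ^ 4 * t)))) + (((36:ℝ) * (a * (c ^ 4 * d))) + ((30:ℝ) * (a * c ^ 5)))) + ((((69:ℝ) * (a * b)) + ((156:ℝ) * (a * (b * t)))) + (((120:ℝ) * (a * (b * t ^ 2))) + ((36:ℝ) * (a * (b * t ^ 3)))))) + (((((3:ℝ) * (a * (b * t ^ 4))) + ((54:ℝ) * (a * (b * d)))) + (((96:ℝ) * (a * (b * (d * t)))) + ((48:ℝ) * (a * (b * (d * t ^ 2)))))) + ((((6:ℝ) * (a * (b * (d * t ^ 3)))) + ((9:ℝ) * (a * (b * d ^ 2)))) + (((12:ℝ) * (a * (b * (d ^ 2 * t)))) + ((3:ℝ) * (a * (b * (d ^ 2 * t ^ 2)))))))) + ((((((276:ℝ) * (a * (b * c))) + ((468:ℝ) * (a * (b * (c * t))))) + (((240:ℝ) * (a * (b * (c * t ^ 2)))) + ((36:ℝ) * (a * (b * (c * t ^ 3))))))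 + ((((162:ℝ) * (a * (b * (c * d)))) + ((192:ℝ) * (a * (b * (c * (d * t)))))) + (((48:ℝ) * (a * (b * (c * (d * t ^ 2))))) + ((18:ℝ) * (a * (b * (c * d ^ 2))))))) + (((((12:ℝ) * (a * (b * (c * (d ^ 2 * t))))) + ((414:ℝ) * (a * (b * c ^ 2)))) + (((468:ℝ) * (a * (b * (c ^ 2 * t)))) + ((120:ℝ) * (a * (b * (c ^ 2 * t ^ 2)))))) + ((((162:ℝ) * (a * (b * (c ^ 2 * d)))) + ((96:ℝ) * (a * (b * (c ^ 2 * (d * t)))))) + (((9:ℝ) * (a * (b * (c ^ 2 * d ^ 2)))) + (((276:ℝ) * (a * (b * c ^ 3))) + ((156:ℝ) * (a * (b * (c ^ 3 * t)))))))))) + (((((((54:ℝ) * (a * (b * (c ^ 3 * d)))) + ((69:ℝ) * (a * (b * c ^ 4)))) + (((57:ℝ) * (a * b ^ 2)) + ((105:ℝ) * (a * (b ^ 2 * t))))) + ((((57:ℝ) * (a * (b ^ 2 * t ^ 2))) + ((9:ℝ) * (a * (b ^ 2 * t ^ 3)))) + (((30:ℝ) * (a * (b ^ 2 * d))) + ((42:ℝ)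 * (a * (b ^ 2 * (d * t))))))) + (((((12:ℝ) * (a * (b ^ 2 * (d * t ^ 2)))) + ((3:ℝ) * (a * (b ^ 2 * d ^ 2)))) + (((3:ℝ) * (a * (b ^ 2 * (d ^ 2 * t)))) + ((171:ℝ) * (a * (b ^ 2 * c))))) + ((((210:ℝ) * (a * (b ^ 2 * (c * t)))) + ((57:ℝ) * (a * (b ^ 2 * (c * t ^ 2))))) + (((60:ℝ) * (a * (b ^ 2 * (c * d)))) + ((42:ℝ) * (a * (b ^ 2 * (c * (d * t))))))))) + ((((((3:ℝ) * (a * (b ^ 2 * (c * d ^ 2)))) + ((171:ℝ) * (a * (b ^ 2 * c ^ 2)))) + (((105:ℝ) * (a * (b ^ 2 * (c ^ 2 * t)))) + ((30:ℝ) * (a * (b ^ 2 * (c ^ 2 * d)))))) + ((((57:ℝ) * (a * (b ^ 2 * c ^ 3))) + ((21:ℝ) * (a * b ^ 3))) + (((30:ℝ) * (a * (b ^ 3 * t))) + ((9:ℝ) * (a * (b ^ 3 * t ^ 2)))))) + (((((6:ℝ) * (a * (b ^ 3 * d))) + ((6:ℝ) * (a * (b ^ 3 * (d * t))))) + (((42:ℝ)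 * (a * (b ^ 3 * c))) + ((30:ℝ) * (a * (b ^ 3 * (c * t)))))) + ((((6:ℝ) * (a * (b ^ 3 * (c * d)))) + ((21:ℝ) * (a * (b ^ 3 * c ^ 2)))) + (((3:ℝ) * (a * b ^ 4)) + (((3:ℝ) * (a * (b ^ 4 * t))) + ((3:ℝ) * (a * (b ^ 4 * c)))))))))))) :=
    (add_nonneg (add_nonneg (add_nonneg (add_nonneg (add_nonneg (add_nonneg (add_nonneg (add_nonneg (mul_nonneg (by norm_num : (0:ℝ) ≤ 54) ht2) (mul_nonneg (by norm_num : (0:ℝ) ≤ 54) (pow_nonneg ht2 2))) (add_nonneg (mul_nonneg (by norm_num : (0:ℝ) ≤ 24) (pow_nonneg ht2 3)) (mul_nonneg (by norm_num : (0:ℝ) ≤ 4) (pow_nonneg ht2 4)))) (add_nonneg (add_nonneg (mul_nonneg (by norm_num : (0:ℝ) ≤ 24) hd) (mul_nonneg (by norm_num : (0:ℝ) ≤ 52) (mul_nonneg hd ht2))) (add_nonneg (mul_nonneg (by norm_num : (0:ℝ) ≤ 36) (mul_nonneg hd (pow_nonneg ht2 2))) (mul_nonneg (by norm_num : (0:ℝ)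 ≤ 8) (mul_nonneg hd (pow_nonneg ht2 3)))))) (add_nonneg (add_nonneg (add_nonneg (mul_nonneg (by norm_num : (0:ℝ) ≤ 4) (pow_nonneg hd 2)) (mul_nonneg (by norm_num : (0:ℝ) ≤ 6) (mul_nonneg (pow_nonneg hd 2) ht2))) (add_nonneg (mul_nonneg (by norm_num : (0:ℝ) ≤ 2) (mul_nonneg (pow_nonneg hd 2) (pow_nonneg ht2 2))) (mul_nonneg (by norm_num : (0:ℝ) ≤ 120) hc))) (add_nonneg (add_nonneg (mul_nonneg (by norm_num : (0:ℝ) ≤ 255) (mul_nonneg hc ht2)) (mul_nonneg (by norm_num : (0:ℝ) ≤ 188) (mul_nonneg hc (pow_nonneg ht2 2)))) (add_nonneg (mul_nonneg (by norm_num : (0:ℝ) ≤ 54) (mul_nonneg hc (pow_nonneg ht2 3))) (mul_nonneg (by norm_num : (0:ℝ) ≤ 4) (mul_nonneg hc (pow_nonneg ht2 4))))))) (add_nonneg (add_nonneg (add_nonneg (add_nonneg (mul_nonneg (by norm_num : (0:ℝ) ≤ 120) (mul_nonneg hc hd)) (mul_nonneg (by norm_num : (0:ℝ) ≤ 194) (mul_nonneg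 hc (mul_nonneg hd ht2)))) (add_nonneg (mul_nonneg (by norm_num : (0:ℝ) ≤ 90) (mul_nonneg hc (mul_nonneg hd (pow_nonneg ht2 2)))) (mul_nonneg (by norm_num : (0:ℝ) ≤ 10) (mul_nonneg hc (mul_nonneg hd (pow_nonneg ht2 3)))))) (add_nonneg (add_nonneg (mul_nonneg (by norm_num : (0:ℝ) ≤ 16) (mul_nonneg hc (pow_nonneg hd 2))) (mul_nonneg (by norm_num : (0:ℝ) ≤ 15) (mul_nonneg hc (mul_nonneg (pow_nonneg hd 2) ht2)))) (add_nonneg (mul_nonneg (by norm_num : (0:ℝ) ≤ 2) (mul_nonneg hc (mul_nonneg (pow_nonneg hd 2) (pow_nonneg ht2 2)))) (mul_nonneg (by norm_num : (0:ℝ) ≤ 300) (pow_nonneg hc 2))))) (add_nonneg (add_nonneg (add_nonneg (mul_nonneg (by norm_num : (0:ℝ) ≤ 480) (mul_nonneg (pow_nonneg hc 2) ht2)) (mul_nonneg (by norm_num : (0:ℝ) ≤ 240) (mul_nonneg (pow_nonneg hc 2) (pow_nonneg ht2 2)))) (add_nonneg (mul_nonneg (by norm_num : (0:ℝ) ≤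 36) (mul_nonneg (pow_nonneg hc 2) (pow_nonneg ht2 3))) (mul_nonneg (by norm_num : (0:ℝ) ≤ 240) (mul_nonneg (pow_nonneg hc 2) hd)))) (add_nonneg (add_nonneg (mul_nonneg (by norm_num : (0:ℝ) ≤ 270) (mul_nonneg (pow_nonneg hc 2) (mul_nonneg hd ht2))) (mul_nonneg (by norm_num : (0:ℝ) ≤ 72) (mul_nonneg (pow_nonneg hc 2) (mul_nonneg hd (pow_nonneg ht2 2))))) (add_nonneg (mul_nonneg (by norm_num : (0:ℝ) ≤ 2) (mul_nonneg (pow_nonneg hc 2) (mul_nonneg hd (pow_nonneg ht2 3)))) (add_nonneg (mul_nonneg (by norm_num : (0:ℝ) ≤ 24) (mul_nonneg (pow_nonneg hc 2) (pow_nonneg hd 2))) (mul_nonneg (by norm_num : (0:ℝ) ≤ 12) (mul_nonneg (pow_nonneg hc 2) (mul_nonneg (pow_nonneg hd 2) ht2))))))))) (add_nonneg (add_nonneg (add_nonneg (add_nonneg (add_nonneg (mul_nonneg (by norm_num : (0:ℝ) ≤ 400) (pow_nonneg hc 3)) (mul_nonneg (by norm_num : (0:ℝ) ≤ 450) (mul_nonneg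 (pow_nonneg hc 3) ht2))) (add_nonneg (mul_nonneg (by norm_num : (0:ℝ) ≤ 132) (mul_nonneg (pow_nonneg hc 3) (pow_nonneg ht2 2))) (mul_nonneg (by norm_num : (0:ℝ) ≤ 6) (mul_nonneg (pow_nonneg hc 3) (pow_nonneg ht2 3))))) (add_nonneg (add_nonneg (mul_nonneg (by norm_num : (0:ℝ) ≤ 240) (mul_nonneg (pow_nonneg hc 3) hd)) (mul_nonneg (by norm_num : (0:ℝ) ≤ 166) (mul_nonneg (pow_nonneg hc 3) (mul_nonneg hd ht2)))) (add_nonneg (mul_nonneg (by norm_num : (0:ℝ) ≤ 18) (mul_nonneg (pow_nonneg hc 3) (mul_nonneg hd (pow_nonneg ht2 2)))) (mul_nonneg (by norm_num : (0:ℝ) ≤ 16) (mul_nonneg (pow_nonneg hc 3) (pow_nonneg hd 2)))))) (add_nonneg (add_nonneg (add_nonneg (mul_nonneg (by norm_num : (0:ℝ) ≤ 3) (mul_nonneg (pow_nonneg hc 3) (mul_nonneg (pow_nonneg hd 2) ht2))) (mul_nonneg (by norm_num : (0:ℝ) ≤ 300) (pow_nonneg hc 4))) (add_nonneg (mul_nonneg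 (by norm_num : (0:ℝ) ≤ 210) (mul_nonneg (pow_nonneg hc 4) ht2)) (mul_nonneg (by norm_num : (0:ℝ) ≤ 26) (mul_nonneg (pow_nonneg hc 4) (pow_nonneg ht2 2))))) (add_nonneg (add_nonneg (mul_nonneg (by norm_num : (0:ℝ) ≤ 120) (mul_nonneg (pow_nonneg hc 4) hd)) (mul_nonneg (by norm_num : (0:ℝ) ≤ 38) (mul_nonneg (pow_nonneg hc 4) (mul_nonneg hd ht2)))) (add_nonneg (mul_nonneg (by norm_num : (0:ℝ) ≤ 4) (mul_nonneg (pow_nonneg hc 4) (pow_nonneg hd 2))) (mul_nonneg (by norm_num : (0:ℝ) ≤ 120) (pow_nonneg hc 5)))))) (add_nonneg (add_nonneg (add_nonneg (add_nonneg (mul_nonneg (by norm_num : (0:ℝ) ≤ 39) (mul_nonneg (pow_nonneg hc 5) ht2)) (mul_nonneg (by norm_num : (0:ℝ) ≤ 24) (mul_nonneg (pow_nonneg hc 5) hd))) (add_nonneg (mul_nonneg (by norm_num : (0:ℝ) ≤ 20) (pow_nonneg hc 6)) (mul_nonneg (by norm_num : (0:ℝ) ≤ 71) hb))) (add_nonneg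 (add_nonneg (mul_nonneg (by norm_num : (0:ℝ) ≤ 167) (mul_nonneg hb ht2)) (mul_nonneg (by norm_num : (0:ℝ) ≤ 137) (mul_nonneg hb (pow_nonneg ht2 2)))) (add_nonneg (mul_nonneg (by norm_num : (0:ℝ) ≤ 46) (mul_nonneg hb (pow_nonneg ht2 3))) (mul_nonneg (by norm_num : (0:ℝ) ≤ 5) (mul_nonneg hb (pow_nonneg ht2 4)))))) (add_nonneg (add_nonneg (add_nonneg (mul_nonneg (by norm_num : (0:ℝ) ≤ 70) (mul_nonneg hb hd)) (mul_nonneg (by norm_num : (0:ℝ) ≤ 140) (mul_nonneg hb (mul_nonneg hd ht2)))) (add_nonneg (mul_nonneg (by norm_num : (0:ℝ) ≤ 90) (mul_nonneg hb (mul_nonneg hd (pow_nonneg ht2 2)))) (mul_nonneg (by norm_num : (0:ℝ) ≤ 22) (mul_nonneg hb (mul_nonneg hd (pow_nonneg ht2 3)))))) (add_nonneg (add_nonneg (mul_nonneg (by norm_num : (0:ℝ) ≤ 2) (mul_nonneg hb (mul_nonneg hd (pow_nonneg ht2 4)))) (mul_nonneg (by norm_num : (0:ℝ) ≤ 15) (mul_nonneg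 hb (pow_nonneg hd 2)))) (add_nonneg (mul_nonneg (by norm_num : (0:ℝ) ≤ 25) (mul_nonneg hb (mul_nonneg (pow_nonneg hd 2) ht2))) (add_nonneg (mul_nonneg (by norm_num : (0:ℝ) ≤ 12) (mul_nonneg hb (mul_nonneg (pow_nonneg hd 2) (pow_nonneg ht2 2)))) (mul_nonneg (by norm_num : (0:ℝ) ≤ 2) (mul_nonneg hb (mul_nonneg (pow_nonneg hd 2) (pow_nonneg ht2 3))))))))))) (add_nonneg (add_nonneg (add_nonneg (add_nonneg (add_nonneg (add_nonneg (mul_nonneg (by norm_num : (0:ℝ) ≤ 355) (mul_nonneg hb hc)) (mul_nonneg (by norm_num : (0:ℝ) ≤ 638) (mul_nonneg hb (mul_nonneg hc ht2)))) (add_nonneg (mul_nonneg (by norm_num : (0:ℝ) ≤ 369) (mul_nonneg hb (mul_nonneg hc (pow_nonneg ht2 2)))) (mul_nonneg (by norm_num : (0:ℝ) ≤ 74) (mul_nonneg hb (mul_nonneg hc (pow_nonneg ht2 3)))))) (add_nonneg (add_nonneg (mul_nonneg (by norm_num : (0:ℝ) ≤ 3) (mul_nonneg hb (mul_nonneg hc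 (pow_nonneg ht2 4)))) (mul_nonneg (by norm_num : (0:ℝ) ≤ 280) (mul_nonneg hb (mul_nonneg hc hd)))) (add_nonneg (mul_nonneg (by norm_num : (0:ℝ) ≤ 398) (mul_nonneg hb (mul_nonneg hc (mul_nonneg hd ht2)))) (mul_nonneg (by norm_num : (0:ℝ) ≤ 160) (mul_nonneg hb (mul_nonneg hc (mul_nonneg hd (pow_nonneg ht2 2)))))))) (add_nonneg (add_nonneg (add_nonneg (mul_nonneg (by norm_num : (0:ℝ) ≤ 18) (mul_nonneg hb (mul_nonneg hc (mul_nonneg hd (pow_nonneg ht2 3))))) (mul_nonneg (by norm_num : (0:ℝ) ≤ 45) (mul_nonneg hb (mul_nonneg hc (pow_nonneg hd 2))))) (add_nonneg (mul_nonneg (by norm_num : (0:ℝ) ≤ 46) (mul_nonneg hb (mul_nonneg hc (mul_nonneg (pow_nonneg hd 2) ht2)))) (mul_nonneg (by norm_num : (0:ℝ) ≤ 10) (mul_nonneg hb (mul_nonneg hc (mul_nonneg (pow_nonneg hd 2) (pow_nonneg ht2 2))))))) (add_nonneg (add_nonneg (mul_nonneg (by norm_num : (0:ℝ) ≤ 710)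 (mul_nonneg hb (pow_nonneg hc 2))) (mul_nonneg (by norm_num : (0:ℝ) ≤ 912) (mul_nonneg hb (mul_nonneg (pow_nonneg hc 2) ht2)))) (add_nonneg (mul_nonneg (by norm_num : (0:ℝ) ≤ 327) (mul_nonneg hb (mul_nonneg (pow_nonneg hc 2) (pow_nonneg ht2 2)))) (mul_nonneg (by norm_num : (0:ℝ) ≤ 28) (mul_nonneg hb (mul_nonneg (pow_nonneg hc 2) (pow_nonneg ht2 3)))))))) (add_nonneg (add_nonneg (add_nonneg (add_nonneg (mul_nonneg (by norm_num : (0:ℝ) ≤ 420) (mul_nonneg hb (mul_nonneg (pow_nonneg hc 2) hd))) (mul_nonneg (by norm_num : (0:ℝ) ≤ 376) (mul_nonneg hb (mul_nonneg (pow_nonneg hc 2) (mul_nonneg hd ht2))))) (add_nonneg (mul_nonneg (by norm_num : (0:ℝ) ≤ 70) (mul_nonneg hb (mul_nonneg (pow_nonneg hc 2) (mul_nonneg hd (pow_nonneg ht2 2))))) (mul_nonneg (by norm_num : (0:ℝ) ≤ 45) (mul_nonneg hb (mul_nonneg (pow_nonneg hc 2) (pow_nonneg hd 2)))))) (add_nonneg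 (add_nonneg (mul_nonneg (by norm_num : (0:ℝ) ≤ 21) (mul_nonneg hb (mul_nonneg (pow_nonneg hc 2) (mul_nonneg (pow_nonneg hd 2) ht2)))) (mul_nonneg (by norm_num : (0:ℝ) ≤ 710) (mul_nonneg hb (pow_nonneg hc 3)))) (add_nonneg (mul_nonneg (by norm_num : (0:ℝ) ≤ 578) (mul_nonneg hb (mul_nonneg (pow_nonneg hc 3) ht2))) (mul_nonneg (by norm_num : (0:ℝ) ≤ 95) (mul_nonneg hb (mul_nonneg (pow_nonneg hc 3) (pow_nonneg ht2 2))))))) (add_nonneg (add_nonneg (add_nonneg (mul_nonneg (by norm_num : (0:ℝ) ≤ 280) (mul_nonneg hb (mul_nonneg (pow_nonneg hc 3) hd))) (mul_nonneg (by norm_num : (0:ℝ) ≤ 118) (mul_nonneg hb (mul_nonneg (pow_nonneg hc 3) (mul_nonneg hd ht2))))) (add_nonneg (mul_nonneg (by norm_num : (0:ℝ) ≤ 15) (mul_nonneg hb (mul_nonneg (pow_nonneg hc 3) (pow_nonneg hd 2)))) (mul_nonneg (by norm_num : (0:ℝ) ≤ 355) (mul_nonneg hb (pow_nonneg hc 4)))))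 (add_nonneg (add_nonneg (mul_nonneg (by norm_num : (0:ℝ) ≤ 137) (mul_nonneg hb (mul_nonneg (pow_nonneg hc 4) ht2))) (mul_nonneg (by norm_num : (0:ℝ) ≤ 70) (mul_nonneg hb (mul_nonneg (pow_nonneg hc 4) hd)))) (add_nonneg (mul_nonneg (by norm_num : (0:ℝ) ≤ 71) (mul_nonneg hb (pow_nonneg hc 5))) (add_nonneg (mul_nonneg (by norm_num : (0:ℝ) ≤ 98) (pow_nonneg hb 2)) (mul_nonneg (by norm_num : (0:ℝ) ≤ 200) (mul_nonneg (pow_nonneg hb 2) ht2)))))))) (add_nonneg (add_nonneg (add_nonneg (add_nonneg (add_nonneg (mul_nonneg (by norm_num : (0:ℝ) ≤ 132) (mul_nonneg (pow_nonneg hb 2) (pow_nonneg ht2 2))) (mul_nonneg (by norm_num : (0:ℝ) ≤ 32) (mul_nonneg (pow_nonneg hb 2) (pow_nonneg ht2 3)))) (add_nonneg (mul_nonneg (by norm_num : (0:ℝ) ≤ 2) (mul_nonneg (pow_nonneg hb 2) (pow_nonneg ht2 4))) (mul_nonneg (by norm_num : (0:ℝ) ≤ 74) (mul_nonneg (pow_nonneg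 hb 2) hd)))) (add_nonneg (add_nonneg (mul_nonneg (by norm_num : (0:ℝ) ≤ 126) (mul_nonneg (pow_nonneg hb 2) (mul_nonneg hd ht2))) (mul_nonneg (by norm_num : (0:ℝ) ≤ 60) (mul_nonneg (pow_nonneg hb 2) (mul_nonneg hd (pow_nonneg ht2 2))))) (add_nonneg (mul_nonneg (by norm_num : (0:ℝ) ≤ 8) (mul_nonneg (pow_nonneg hb 2) (mul_nonneg hd (pow_nonneg ht2 3)))) (mul_nonneg (by norm_num : (0:ℝ) ≤ 12) (mul_nonneg (pow_nonneg hb 2) (pow_nonneg hd 2)))))) (add_nonneg (add_nonneg (add_nonneg (mul_nonneg (by norm_num : (0:ℝ) ≤ 16) (mul_nonneg (pow_nonneg hb 2) (mul_nonneg (pow_nonneg hd 2) ht2))) (mul_nonneg (by norm_num : (0:ℝ) ≤ 4) (mul_nonneg (pow_nonneg hb 2) (mul_nonneg (pow_nonneg hd 2) (pow_nonneg ht2 2))))) (add_nonneg (mul_nonneg (by norm_num : (0:ℝ) ≤ 392) (mul_nonneg (pow_nonneg hb 2) hc)) (mul_nonneg (by norm_num : (0:ℝ) ≤ 577) (mul_nonneg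 (pow_nonneg hb 2) (mul_nonneg hc ht2))))) (add_nonneg (add_nonneg (mul_nonneg (by norm_num : (0:ℝ) ≤ 242) (mul_nonneg (pow_nonneg hb 2) (mul_nonneg hc (pow_nonneg ht2 2)))) (mul_nonneg (by norm_num : (0:ℝ) ≤ 27) (mul_nonneg (pow_nonneg hb 2) (mul_nonneg hc (pow_nonneg ht2 3))))) (add_nonneg (mul_nonneg (by norm_num : (0:ℝ) ≤ 222) (mul_nonneg (pow_nonneg hb 2) (mul_nonneg hc hd))) (mul_nonneg (by norm_num : (0:ℝ) ≤ 240) (mul_nonneg (pow_nonneg hb 2) (mul_nonneg hc (mul_nonneg hd ht2)))))))) (add_nonneg (add_nonneg (add_nonneg (add_nonneg (mul_nonneg (by norm_num : (0:ℝ) ≤ 54) (mul_nonneg (pow_nonneg hb 2) (mul_nonneg hc (mul_nonneg hd (pow_nonneg ht2 2))))) (mul_nonneg (by norm_num : (0:ℝ) ≤ 24) (mul_nonneg (pow_nonneg hb 2) (mul_nonneg hc (pow_nonneg hd 2))))) (add_nonneg (mul_nonneg (by norm_num : (0:ℝ) ≤ 15) (mul_nonneg (pow_nonneg hb 2) (mul_nonneg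 hc (mul_nonneg (pow_nonneg hd 2) ht2)))) (mul_nonneg (by norm_num : (0:ℝ) ≤ 588) (mul_nonneg (pow_nonneg hb 2) (pow_nonneg hc 2))))) (add_nonneg (add_nonneg (mul_nonneg (by norm_num : (0:ℝ) ≤ 554) (mul_nonneg (pow_nonneg hb 2) (mul_nonneg (pow_nonneg hc 2) ht2))) (mul_nonneg (by norm_num : (0:ℝ) ≤ 110) (mul_nonneg (pow_nonneg hb 2) (mul_nonneg (pow_nonneg hc 2) (pow_nonneg ht2 2))))) (add_nonneg (mul_nonneg (by norm_num : (0:ℝ) ≤ 222) (mul_nonneg (pow_nonneg hb 2) (mul_nonneg (pow_nonneg hc 2) hd))) (mul_nonneg (by norm_num : (0:ℝ) ≤ 114) (mul_nonneg (pow_nonneg hb 2) (mul_nonneg (pow_nonneg hc 2) (mul_nonneg hd ht2))))))) (add_nonneg (add_nonneg (add_nonneg (mul_nonneg (by norm_num : (0:ℝ) ≤ 12) (mul_nonneg (pow_nonneg hb 2) (mul_nonneg (pow_nonneg hc 2) (pow_nonneg hd 2)))) (mul_nonneg (by norm_num : (0:ℝ) ≤ 392) (mul_nonneg (pow_nonneg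 hb 2) (pow_nonneg hc 3)))) (add_nonneg (mul_nonneg (by norm_num : (0:ℝ) ≤ 177) (mul_nonneg (pow_nonneg hb 2) (mul_nonneg (pow_nonneg hc 3) ht2))) (mul_nonneg (by norm_num : (0:ℝ) ≤ 74) (mul_nonneg (pow_nonneg hb 2) (mul_nonneg (pow_nonneg hc 3) hd))))) (add_nonneg (add_nonneg (mul_nonneg (by norm_num : (0:ℝ) ≤ 98) (mul_nonneg (pow_nonneg hb 2) (pow_nonneg hc 4))) (mul_nonneg (by norm_num : (0:ℝ) ≤ 66) (pow_nonneg hb 3))) (add_nonneg (mul_nonneg (by norm_num : (0:ℝ) ≤ 113) (mul_nonneg (pow_nonneg hb 3) ht2)) (add_nonneg (mul_nonneg (by norm_num : (0:ℝ) ≤ 54) (mul_nonneg (pow_nonneg hb 3) (pow_nonneg ht2 2))) (mul_nonneg (by norm_num : (0:ℝ) ≤ 7) (mul_nonneg (pow_nonneg hb 3) (pow_nonneg ht2 3))))))))))) (add_nonneg (add_nonneg (add_nonneg (add_nonneg (add_nonneg (add_nonneg (add_nonneg (mul_nonneg (by norm_num : (0:ℝ) ≤ 34) (mul_nonneg (pow_nonneg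 hb 3) hd)) (mul_nonneg (by norm_num : (0:ℝ) ≤ 46) (mul_nonneg (pow_nonneg hb 3) (mul_nonneg hd ht2)))) (add_nonneg (mul_nonneg (by norm_num : (0:ℝ) ≤ 12) (mul_nonneg (pow_nonneg hb 3) (mul_nonneg hd (pow_nonneg ht2 2)))) (mul_nonneg (by norm_num : (0:ℝ) ≤ 3) (mul_nonneg (pow_nonneg hb 3) (pow_nonneg hd 2))))) (add_nonneg (add_nonneg (mul_nonneg (by norm_num : (0:ℝ) ≤ 3) (mul_nonneg (pow_nonneg hb 3) (mul_nonneg (pow_nonneg hd 2) ht2))) (mul_nonneg (by norm_num : (0:ℝ) ≤ 198) (mul_nonneg (pow_nonneg hb 3) hc))) (add_nonneg (mul_nonneg (by norm_num : (0:ℝ) ≤ 218) (mul_nonneg (pow_nonneg hb 3) (mul_nonneg hc ht2))) (mul_nonneg (by norm_num : (0:ℝ) ≤ 50) (mul_nonneg (pow_nonneg hb 3) (mul_nonneg hc (pow_nonneg ht2 2))))))) (add_nonneg (add_nonneg (add_nonneg (mul_nonneg (by norm_num : (0:ℝ) ≤ 68) (mul_nonneg (pow_nonneg hb 3) (mul_nonneg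 hc hd))) (mul_nonneg (by norm_num : (0:ℝ) ≤ 44) (mul_nonneg (pow_nonneg hb 3) (mul_nonneg hc (mul_nonneg hd ht2))))) (add_nonneg (mul_nonneg (by norm_num : (0:ℝ) ≤ 3) (mul_nonneg (pow_nonneg hb 3) (mul_nonneg hc (pow_nonneg hd 2)))) (mul_nonneg (by norm_num : (0:ℝ) ≤ 198) (mul_nonneg (pow_nonneg hb 3) (pow_nonneg hc 2))))) (add_nonneg (add_nonneg (mul_nonneg (by norm_num : (0:ℝ) ≤ 105) (mul_nonneg (pow_nonneg hb 3) (mul_nonneg (pow_nonneg hc 2) ht2))) (mul_nonneg (by norm_num : (0:ℝ) ≤ 34) (mul_nonneg (pow_nonneg hb 3) (mul_nonneg (pow_nonneg hc 2) hd)))) (add_nonneg (mul_nonneg (by norm_num : (0:ℝ) ≤ 66) (mul_nonneg (pow_nonneg hb 3) (pow_nonneg hc 3))) (mul_nonneg (by norm_num : (0:ℝ) ≤ 22) (pow_nonneg hb 4)))))) (add_nonneg (add_nonneg (add_nonneg (add_nonneg (mul_nonneg (by norm_num : (0:ℝ) ≤ 30) (mul_nonneg (pow_nonneg hb 4) ht2))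 (mul_nonneg (by norm_num : (0:ℝ) ≤ 8) (mul_nonneg (pow_nonneg hb 4) (pow_nonneg ht2 2)))) (add_nonneg (mul_nonneg (by norm_num : (0:ℝ) ≤ 6) (mul_nonneg (pow_nonneg hb 4) hd)) (mul_nonneg (by norm_num : (0:ℝ) ≤ 6) (mul_nonneg (pow_nonneg hb 4) (mul_nonneg hd ht2))))) (add_nonneg (add_nonneg (mul_nonneg (by norm_num : (0:ℝ) ≤ 44) (mul_nonneg (pow_nonneg hb 4) hc)) (mul_nonneg (by norm_num : (0:ℝ) ≤ 29) (mul_nonneg (pow_nonneg hb 4) (mul_nonneg hc ht2)))) (add_nonneg (mul_nonneg (by norm_num : (0:ℝ) ≤ 6) (mul_nonneg (pow_nonneg hb 4) (mul_nonneg hc hd))) (mul_nonneg (by norm_num : (0:ℝ) ≤ 22) (mul_nonneg (pow_nonneg hb 4) (pow_nonneg hc 2)))))) (add_nonneg (add_nonneg (add_nonneg (mul_nonneg (by norm_num : (0:ℝ) ≤ 3) (pow_nonneg hb 5)) (mul_nonneg (by norm_num : (0:ℝ) ≤ 3) (mul_nonneg (pow_nonneg hb 5) ht2))) (add_nonneg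 (mul_nonneg (by norm_num : (0:ℝ) ≤ 3) (mul_nonneg (pow_nonneg hb 5) hc)) (mul_nonneg (by norm_num : (0:ℝ) ≤ 30) ha))) (add_nonneg (add_nonneg (mul_nonneg (by norm_num : (0:ℝ) ≤ 81) (mul_nonneg ha ht2)) (mul_nonneg (by norm_num : (0:ℝ) ≤ 81) (mul_nonneg ha (pow_nonneg ht2 2)))) (add_nonneg (mul_nonneg (by norm_num : (0:ℝ) ≤ 36) (mul_nonneg ha (pow_nonneg ht2 3))) (add_nonneg (mul_nonneg (by norm_num : (0:ℝ) ≤ 6) (mul_nonneg ha (pow_nonneg ht2 4))) (mul_nonneg (by norm_num : (0:ℝ) ≤ 36) (mul_nonneg ha hd)))))))) (add_nonneg (add_nonneg (add_nonneg (add_nonneg (add_nonneg (mul_nonneg (by norm_num : (0:ℝ) ≤ 78) (mul_nonneg ha (mul_nonneg hd ht2))) (mul_nonneg (by norm_num : (0:ℝ) ≤ 54) (mul_nonneg ha (mul_nonneg hd (pow_nonneg ht2 2))))) (add_nonneg (mul_nonneg (by norm_num : (0:ℝ) ≤ 12) (mul_nonneg ha (mul_nonneg hd (pow_nonneg ht2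 3)))) (mul_nonneg (by norm_num : (0:ℝ) ≤ 6) (mul_nonneg ha (pow_nonneg hd 2))))) (add_nonneg (add_nonneg (mul_nonneg (by norm_num : (0:ℝ) ≤ 9) (mul_nonneg ha (mul_nonneg (pow_nonneg hd 2) ht2))) (mul_nonneg (by norm_num : (0:ℝ) ≤ 3) (mul_nonneg ha (mul_nonneg (pow_nonneg hd 2) (pow_nonneg ht2 2))))) (add_nonneg (mul_nonneg (by norm_num : (0:ℝ) ≤ 150) (mul_nonneg ha hc)) (mul_nonneg (by norm_num : (0:ℝ) ≤ 324) (mul_nonneg ha (mul_nonneg hc ht2)))))) (add_nonneg (add_nonneg (add_nonneg (mul_nonneg (by norm_num : (0:ℝ) ≤ 243) (mul_nonneg ha (mul_nonneg hc (pow_nonneg ht2 2)))) (mul_nonneg (by norm_num : (0:ℝ) ≤ 72) (mul_nonneg ha (mul_nonneg hc (pow_nonneg ht2 3))))) (add_nonneg (mul_nonneg (by norm_num : (0:ℝ) ≤ 6) (mul_nonneg ha (mul_nonneg hc (pow_nonneg ht2 4)))) (mul_nonneg (by norm_num : (0:ℝ) ≤ 144) (mul_nonneg ha (mul_nonneg hc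 hd))))) (add_nonneg (add_nonneg (mul_nonneg (by norm_num : (0:ℝ) ≤ 234) (mul_nonneg ha (mul_nonneg hc (mul_nonneg hd ht2)))) (mul_nonneg (by norm_num : (0:ℝ) ≤ 108) (mul_nonneg ha (mul_nonneg hc (mul_nonneg hd (pow_nonneg ht2 2)))))) (add_nonneg (mul_nonneg (by norm_num : (0:ℝ) ≤ 12) (mul_nonneg ha (mul_nonneg hc (mul_nonneg hd (pow_nonneg ht2 3))))) (mul_nonneg (by norm_num : (0:ℝ) ≤ 18) (mul_nonneg ha (mul_nonneg hc (pow_nonneg hd 2)))))))) (add_nonneg (add_nonneg (add_nonneg (add_nonneg (mul_nonneg (by norm_num : (0:ℝ) ≤ 18) (mul_nonneg ha (mul_nonneg hc (mul_nonneg (pow_nonneg hd 2) ht2)))) (mul_nonneg (by norm_num : (0:ℝ) ≤ 3) (mul_nonneg ha (mul_nonneg hc (mul_nonneg (pow_nonneg hd 2) (pow_nonneg ht2 2)))))) (add_nonneg (mul_nonneg (by norm_num : (0:ℝ) ≤ 300) (mul_nonneg ha (pow_nonneg hc 2))) (mul_nonneg (by norm_num : (0:ℝ) ≤ 486) (mul_nonneg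 ha (mul_nonneg (pow_nonneg hc 2) ht2))))) (add_nonneg (add_nonneg (mul_nonneg (by norm_num : (0:ℝ) ≤ 243) (mul_nonneg ha (mul_nonneg (pow_nonneg hc 2) (pow_nonneg ht2 2)))) (mul_nonneg (by norm_num : (0:ℝ) ≤ 36) (mul_nonneg ha (mul_nonneg (pow_nonneg hc 2) (pow_nonneg ht2 3))))) (add_nonneg (mul_nonneg (by norm_num : (0:ℝ) ≤ 216) (mul_nonneg ha (mul_nonneg (pow_nonneg hc 2) hd))) (mul_nonneg (by norm_num : (0:ℝ) ≤ 234) (mul_nonneg ha (mul_nonneg (pow_nonneg hc 2) (mul_nonneg hd ht2))))))) (add_nonneg (add_nonneg (add_nonneg (mul_nonneg (by norm_num : (0:ℝ) ≤ 54) (mul_nonneg ha (mul_nonneg (pow_nonneg hc 2) (mul_nonneg hd (pow_nonneg ht2 2))))) (mul_nonneg (by norm_num : (0:ℝ) ≤ 18) (mul_nonneg ha (mul_nonneg (pow_nonneg hc 2) (pow_nonneg hd 2))))) (add_nonneg (mul_nonneg (by norm_num : (0:ℝ) ≤ 9) (mul_nonneg ha (mul_nonneg (pow_nonneg hc 2)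 (mul_nonneg (pow_nonneg hd 2) ht2)))) (mul_nonneg (by norm_num : (0:ℝ) ≤ 300) (mul_nonneg ha (pow_nonneg hc 3))))) (add_nonneg (add_nonneg (mul_nonneg (by norm_num : (0:ℝ) ≤ 324) (mul_nonneg ha (mul_nonneg (pow_nonneg hc 3) ht2))) (mul_nonneg (by norm_num : (0:ℝ) ≤ 81) (mul_nonneg ha (mul_nonneg (pow_nonneg hc 3) (pow_nonneg ht2 2))))) (add_nonneg (mul_nonneg (by norm_num : (0:ℝ) ≤ 144) (mul_nonneg ha (mul_nonneg (pow_nonneg hc 3) hd))) (add_nonneg (mul_nonneg (by norm_num : (0:ℝ) ≤ 78) (mul_nonneg ha (mul_nonneg (pow_nonneg hc 3) (mul_nonneg hd ht2)))) (mul_nonneg (by norm_num : (0:ℝ) ≤ 6) (mul_nonneg ha (mul_nonneg (pow_nonneg hc 3) (pow_nonneg hd 2))))))))))) (add_nonneg (add_nonneg (add_nonneg (add_nonneg (add_nonneg (add_nonneg (mul_nonneg (by norm_num : (0:ℝ) ≤ 150) (mul_nonneg ha (pow_nonneg hc 4))) (mul_nonneg (by norm_num : (0:ℝ) ≤ 81)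 (mul_nonneg ha (mul_nonneg (pow_nonneg hc 4) ht2)))) (add_nonneg (mul_nonneg (by norm_num : (0:ℝ) ≤ 36) (mul_nonneg ha (mul_nonneg (pow_nonneg hc 4) hd))) (mul_nonneg (by norm_num : (0:ℝ) ≤ 30) (mul_nonneg ha (pow_nonneg hc 5))))) (add_nonneg (add_nonneg (mul_nonneg (by norm_num : (0:ℝ) ≤ 69) (mul_nonneg ha hb)) (mul_nonneg (by norm_num : (0:ℝ) ≤ 156) (mul_nonneg ha (mul_nonneg hb ht2)))) (add_nonneg (mul_nonneg (by norm_num : (0:ℝ) ≤ 120) (mul_nonneg ha (mul_nonneg hb (pow_nonneg ht2 2)))) (mul_nonneg (by norm_num : (0:ℝ) ≤ 36) (mul_nonneg ha (mul_nonneg hb (pow_nonneg ht2 3))))))) (add_nonneg (add_nonneg (add_nonneg (mul_nonneg (by norm_num : (0:ℝ) ≤ 3) (mul_nonneg ha (mul_nonneg hb (pow_nonneg ht2 4)))) (mul_nonneg (by norm_num : (0:ℝ) ≤ 54) (mul_nonneg ha (mul_nonneg hb hd)))) (add_nonneg (mul_nonneg (by norm_num : (0:ℝ) ≤ 96) (mul_nonneg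 ha (mul_nonneg hb (mul_nonneg hd ht2)))) (mul_nonneg (by norm_num : (0:ℝ) ≤ 48) (mul_nonneg ha (mul_nonneg hb (mul_nonneg hd (pow_nonneg ht2 2))))))) (add_nonneg (add_nonneg (mul_nonneg (by norm_num : (0:ℝ) ≤ 6) (mul_nonneg ha (mul_nonneg hb (mul_nonneg hd (pow_nonneg ht2 3))))) (mul_nonneg (by norm_num : (0:ℝ) ≤ 9) (mul_nonneg ha (mul_nonneg hb (pow_nonneg hd 2))))) (add_nonneg (mul_nonneg (by norm_num : (0:ℝ) ≤ 12) (mul_nonneg ha (mul_nonneg hb (mul_nonneg (pow_nonneg hd 2) ht2)))) (mul_nonneg (by norm_num : (0:ℝ) ≤ 3) (mul_nonneg ha (mul_nonneg hb (mul_nonneg (pow_nonneg hd 2) (pow_nonneg ht2 2))))))))) (add_nonneg (add_nonneg (add_nonneg (add_nonneg (mul_nonneg (by norm_num : (0:ℝ) ≤ 276) (mul_nonneg ha (mul_nonneg hb hc))) (mul_nonneg (by norm_num : (0:ℝ) ≤ 468) (mul_nonneg ha (mul_nonneg hb (mul_nonneg hc ht2))))) (add_nonneg (mul_nonneg (by norm_num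 : (0:ℝ) ≤ 240) (mul_nonneg ha (mul_nonneg hb (mul_nonneg hc (pow_nonneg ht2 2))))) (mul_nonneg (by norm_num : (0:ℝ) ≤ 36) (mul_nonneg ha (mul_nonneg hb (mul_nonneg hc (pow_nonneg ht2 3))))))) (add_nonneg (add_nonneg (mul_nonneg (by norm_num : (0:ℝ) ≤ 162) (mul_nonneg ha (mul_nonneg hb (mul_nonneg hc hd)))) (mul_nonneg (by norm_num : (0:ℝ) ≤ 192) (mul_nonneg ha (mul_nonneg hb (mul_nonneg hc (mul_nonneg hd ht2)))))) (add_nonneg (mul_nonneg (by norm_num : (0:ℝ) ≤ 48) (mul_nonneg ha (mul_nonneg hb (mul_nonneg hc (mul_nonneg hd (pow_nonneg ht2 2)))))) (mul_nonneg (by norm_num : (0:ℝ) ≤ 18) (mul_nonneg ha (mul_nonneg hb (mul_nonneg hc (pow_nonneg hd 2)))))))) (add_nonneg (add_nonneg (add_nonneg (mul_nonneg (by norm_num : (0:ℝ) ≤ 12) (mul_nonneg ha (mul_nonneg hb (mul_nonneg hc (mul_nonneg (pow_nonneg hd 2) ht2))))) (mul_nonneg (by norm_num : (0:ℝ) ≤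 414) (mul_nonneg ha (mul_nonneg hb (pow_nonneg hc 2))))) (add_nonneg (mul_nonneg (by norm_num : (0:ℝ) ≤ 468) (mul_nonneg ha (mul_nonneg hb (mul_nonneg (pow_nonneg hc 2) ht2)))) (mul_nonneg (by norm_num : (0:ℝ) ≤ 120) (mul_nonneg ha (mul_nonneg hb (mul_nonneg (pow_nonneg hc 2) (pow_nonneg ht2 2))))))) (add_nonneg (add_nonneg (mul_nonneg (by norm_num : (0:ℝ) ≤ 162) (mul_nonneg ha (mul_nonneg hb (mul_nonneg (pow_nonneg hc 2) hd)))) (mul_nonneg (by norm_num : (0:ℝ) ≤ 96) (mul_nonneg ha (mul_nonneg hb (mul_nonneg (pow_nonneg hc 2) (mul_nonneg hd ht2)))))) (add_nonneg (mul_nonneg (by norm_num : (0:ℝ) ≤ 9) (mul_nonneg ha (mul_nonneg hb (mul_nonneg (pow_nonneg hc 2) (pow_nonneg hd 2))))) (add_nonneg (mul_nonneg (by norm_num : (0:ℝ) ≤ 276) (mul_nonneg ha (mul_nonneg hb (pow_nonneg hc 3)))) (mul_nonneg (by norm_num : (0:ℝ) ≤ 156) (mul_nonneg ha (mul_nonneg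 hb (mul_nonneg (pow_nonneg hc 3) ht2)))))))))) (add_nonneg (add_nonneg (add_nonneg (add_nonneg (add_nonneg (mul_nonneg (by norm_num : (0:ℝ) ≤ 54) (mul_nonneg ha (mul_nonneg hb (mul_nonneg (pow_nonneg hc 3) hd)))) (mul_nonneg (by norm_num : (0:ℝ) ≤ 69) (mul_nonneg ha (mul_nonneg hb (pow_nonneg hc 4))))) (add_nonneg (mul_nonneg (by norm_num : (0:ℝ) ≤ 57) (mul_nonneg ha (pow_nonneg hb 2))) (mul_nonneg (by norm_num : (0:ℝ) ≤ 105) (mul_nonneg ha (mul_nonneg (pow_nonneg hb 2) ht2))))) (add_nonneg (add_nonneg (mul_nonneg (by norm_num : (0:ℝ) ≤ 57) (mul_nonneg ha (mul_nonneg (pow_nonneg hb 2) (pow_nonneg ht2 2)))) (mul_nonneg (by norm_num : (0:ℝ) ≤ 9) (mul_nonneg ha (mul_nonneg (pow_nonneg hb 2) (pow_nonneg ht2 3))))) (add_nonneg (mul_nonneg (by norm_num : (0:ℝ) ≤ 30) (mul_nonneg ha (mul_nonneg (pow_nonneg hb 2) hd))) (mul_nonneg (by norm_num : (0:ℝ)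 ≤ 42) (mul_nonneg ha (mul_nonneg (pow_nonneg hb 2) (mul_nonneg hd ht2))))))) (add_nonneg (add_nonneg (add_nonneg (mul_nonneg (by norm_num : (0:ℝ) ≤ 12) (mul_nonneg ha (mul_nonneg (pow_nonneg hb 2) (mul_nonneg hd (pow_nonneg ht2 2))))) (mul_nonneg (by norm_num : (0:ℝ) ≤ 3) (mul_nonneg ha (mul_nonneg (pow_nonneg hb 2) (pow_nonneg hd 2))))) (add_nonneg (mul_nonneg (by norm_num : (0:ℝ) ≤ 3) (mul_nonneg ha (mul_nonneg (pow_nonneg hb 2) (mul_nonneg (pow_nonneg hd 2) ht2)))) (mul_nonneg (by norm_num : (0:ℝ) ≤ 171) (mul_nonneg ha (mul_nonneg (pow_nonneg hb 2) hc))))) (add_nonneg (add_nonneg (mul_nonneg (by norm_num : (0:ℝ) ≤ 210) (mul_nonneg ha (mul_nonneg (pow_nonneg hb 2) (mul_nonneg hc ht2)))) (mul_nonneg (by norm_num : (0:ℝ) ≤ 57) (mul_nonneg ha (mul_nonneg (pow_nonneg hb 2) (mul_nonneg hc (pow_nonneg ht2 2)))))) (add_nonneg (mul_nonneg (by norm_num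 : (0:ℝ) ≤ 60) (mul_nonneg ha (mul_nonneg (pow_nonneg hb 2) (mul_nonneg hc hd)))) (mul_nonneg (by norm_num : (0:ℝ) ≤ 42) (mul_nonneg ha (mul_nonneg (pow_nonneg hb 2) (mul_nonneg hc (mul_nonneg hd ht2))))))))) (add_nonneg (add_nonneg (add_nonneg (add_nonneg (mul_nonneg (by norm_num : (0:ℝ) ≤ 3) (mul_nonneg ha (mul_nonneg (pow_nonneg hb 2) (mul_nonneg hc (pow_nonneg hd 2))))) (mul_nonneg (by norm_num : (0:ℝ) ≤ 171) (mul_nonneg ha (mul_nonneg (pow_nonneg hb 2) (pow_nonneg hc 2))))) (add_nonneg (mul_nonneg (by norm_num : (0:ℝ) ≤ 105) (mul_nonneg ha (mul_nonneg (pow_nonneg hb 2) (mul_nonneg (pow_nonneg hc 2) ht2)))) (mul_nonneg (by norm_num : (0:ℝ) ≤ 30) (mul_nonneg ha (mul_nonneg (pow_nonneg hb 2) (mul_nonneg (pow_nonneg hc 2) hd)))))) (add_nonneg (add_nonneg (mul_nonneg (by norm_num : (0:ℝ) ≤ 57) (mul_nonneg ha (mul_nonneg (pow_nonneg hb 2)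 (pow_nonneg hc 3)))) (mul_nonneg (by norm_num : (0:ℝ) ≤ 21) (mul_nonneg ha (pow_nonneg hb 3)))) (add_nonneg (mul_nonneg (by norm_num : (0:ℝ) ≤ 30) (mul_nonneg ha (mul_nonneg (pow_nonneg hb 3) ht2))) (mul_nonneg (by norm_num : (0:ℝ) ≤ 9) (mul_nonneg ha (mul_nonneg (pow_nonneg hb 3) (pow_nonneg ht2 2))))))) (add_nonneg (add_nonneg (add_nonneg (mul_nonneg (by norm_num : (0:ℝ) ≤ 6) (mul_nonneg ha (mul_nonneg (pow_nonneg hb 3) hd))) (mul_nonneg (by norm_num : (0:ℝ) ≤ 6) (mul_nonneg ha (mul_nonneg (pow_nonneg hb 3) (mul_nonneg hd ht2))))) (add_nonneg (mul_nonneg (by norm_num : (0:ℝ) ≤ 42) (mul_nonneg ha (mul_nonneg (pow_nonneg hb 3) hc))) (mul_nonneg (by norm_num : (0:ℝ) ≤ 30) (mul_nonneg ha (mul_nonneg (pow_nonneg hb 3) (mul_nonneg hc ht2)))))) (add_nonneg (add_nonneg (mul_nonneg (by norm_num : (0:ℝ) ≤ 6) (mul_nonneg ha (mul_nonneg (pow_nonneg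 hb 3) (mul_nonneg hc hd)))) (mul_nonneg (by norm_num : (0:ℝ) ≤ 21) (mul_nonneg ha (mul_nonneg (pow_nonneg hb 3) (pow_nonneg hc 2))))) (add_nonneg (mul_nonneg (by norm_num : (0:ℝ) ≤ 3) (mul_nonneg ha (pow_nonneg hb 4))) (add_nonneg (mul_nonneg (by norm_num : (0:ℝ) ≤ 3) (mul_nonneg ha (mul_nonneg (pow_nonneg hb 4) ht2))) (mul_nonneg (by norm_num : (0:ℝ) ≤ 3) (mul_nonneg ha (mul_nonneg (pow_nonneg hb 4) hc))))))))))))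
  linarith [hE]

section AuxiliaryLemmas

lemma err_comb (μ σ2 N S : ℝ) (hS : 0 < S) : μ/S + σ2*N/S^2 = (μ*S + σ2*N)/S^2 := by
  field_simp

lemma welcomeP (k m T q z : ℝ) (hm : 0 ≤ m) (hmk : m ≤ k) (hT : 0 ≤ T) (hq : 0 ≤ q)
    (hz : 0 ≤ z) (hzk : z ≤ k) :
    (3*k*(m+T+z)+q+z^2+(T+z)^2)*(m+T)^2 ≤ (3*k*(m+T)+q+T^2)*(m+T+z)^2 := by
  have hkz : 0 ≤ k - z := by linarith
  have hkm : 0 ≤ k - m := by linarith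
  have hk : 0 ≤ k := by linarith
  nlinarith [mul_nonneg (mul_nonneg hq hz) hz, mul_nonneg (mul_nonneg hq hz) hT,
    mul_nonneg (mul_nonneg hq hz) hm,
    mul_nonneg (mul_nonneg (mul_nonneg hz hT) hT) hkz,
    mul_nonneg (mul_nonneg (mul_nonneg hz hT) hT) hkm,
    mul_nonneg (mul_nonneg (mul_nonneg hz hm) hT) hkz,
    mul_nonneg (mul_nonneg (mul_nonneg hz hm) hT) hkm,
    mul_nonneg (mul_nonneg (mul_nonneg hz hm) hm) hkz,
    mul_nonneg (mul_nonneg (mul_nonneg hz hm) hm) hk,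
    mul_nonneg (mul_nonneg (mul_nonneg hz hz) hT) hk,
    mul_nonneg (mul_nonneg (mul_nonneg hz hz) hm) hk]

set_option maxHeartbeats 4000000 in
lemma switchR (μ σ2 k x y s t u v : ℝ) (hσ : 0 < σ2) (hμ : μ = 3*σ2*k)
    (hy : 1 ≤ y) (hyx : y ≤ x) (hxk : x ≤ k) (ht : 0 ≤ t) (hts : t ≤ s) (hvt : t ≤ v) :
    μ/(x+(y+t)) + σ2*((y^2+v)+(y+t)^2)/(x+(y+t))^2 < μ/(x+s) + σ2*(u+s^2)/(x+s)^2 ∨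
    μ/(y+(x+s)) + σ2*((x^2+u)+(x+s)^2)/(y+(x+s))^2 < μ/(y+t) + σ2*(v+t^2)/(y+t)^2 := by
  have hx1 : 1 ≤ x := le_trans hy hyx
  have hs : 0 ≤ s := le_trans ht hts
  have d1 : 0 < x+(y+t) := by linarith
  have d2 : 0 < x+s := by linarith
  have d3 : 0 < y+(x+s) := by linarith
  have d4 : 0 < y+t := by linarith
  by_cases h2 : μ/(y+(x+s)) + σ2*((x^2+u)+(x+s)^2)/(y+(x+s))^2 < μ/(y+t) + σ2*(v+t^2)/(y+t)^2
  · exact Or.inr h2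
  left
  push_neg at h2
  rw [err_comb μ σ2 _ _ d4, err_comb μ σ2 _ _ d3,
    div_le_div_iff₀ (by positivity) (by positivity)] at h2
  rw [err_comb μ σ2 _ _ d1, err_comb μ σ2 _ _ d2,
    div_lt_div_iff₀ (by positivity) (by positivity)]
  subst hμ
  have hψ := psi_pos k x y s t hy hyx hxk ht hts
  have hγ : 0 ≤ ((x+y+t)^2*(x+y+s)^2 - (x+s)^2*(y+t)^2) * (v - t) := by
    apply mul_nonneg _ (by linarith)
    have hq1 : 0 ≤ (x+s)*(y+t) := (mul_pos d2 d4).le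
    have hq2 : (x+s)*(y+t) ≤ (x+y+t)*(x+y+s) := by nlinarith
    nlinarith [mul_self_le_mul_self hq1 hq2]
  have hh1 : 0 ≤ (x+(y+t))^2 * ((3*σ2*k*(y+(x+s)) + σ2*((x^2+u)+(x+s)^2))*(y+t)^2
      - (3*σ2*k*(y+t) + σ2*(v+t^2))*(y+(x+s))^2) :=
    mul_nonneg (sq_nonneg _) (sub_nonneg.2 h2)
  have hh2 : 0 ≤ σ2 * ((((x+y+t)^2*(x+y+s)^2 - (x+s)^2*(y+t)^2) * (v - t))) :=
    mul_nonneg hσ.le hγ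
  have hh3 : 0 < σ2 *
      ((y+t)^2*((3*k*(x+s)+s^2)*(x+y+t)^2-((3*k*(x+y+t)+y^2+(y+t)^2)*(x+s)^2 + t*(x+s)^2))
      - (x+y+t)^2*((3*k*(x+y+s)+x^2+(x+s)^2)*(y+t)^2-((3*k*(y+t)+t^2)*(x+y+s)^2 + t*(x+y+s)^2))) :=
    mul_pos hσ hψ
  have hP1 : 0 < (y+t)^2 * ((3*σ2*k*(x+s) + σ2*(u+s^2))*(x+(y+t))^2
      - (3*σ2*k*(x+(y+t)) + σ2*((y^2+v)+(y+t)^2))*(x+s)^2) := by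
    linarith [hh1, hh2, hh3]
  by_contra hC
  push_neg at hC
  have h8 : (3*σ2*k*(x+s) + σ2*(u+s^2))*(x+(y+t))^2
      - (3*σ2*k*(x+(y+t)) + σ2*((y^2+v)+(y+t)^2))*(x+s)^2 ≤ 0 := sub_nonpos.2 hC
  have h9 : (y+t)^2 * ((3*σ2*k*(x+s) + σ2*(u+s^2))*(x+(y+t))^2
      - (3*σ2*k*(x+(y+t)) + σ2*((y^2+v)+(y+t)^2))*(x+s)^2) ≤ (y+t)^2 * 0 :=
    mul_le_mul_of_nonneg_left h8 (sq_nonneg _)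
  rw [mul_zero] at h9
  linarith [hP1, h9]

lemma welcomeR (μ σ2 k m T q z : ℝ) (hσ : 0 < σ2) (hμ : μ = 3*σ2*k) (hm : 1 ≤ m)
    (hmk : m ≤ k) (hT : 0 ≤ T) (hq : 0 ≤ q) (hz : 1 ≤ z) (hzk : z ≤ k) :
    μ/(z+(m+T)) + σ2*((z^2+q)+(z+T)^2)/(z+(m+T))^2 ≤ μ/(m+T) + σ2*(q+T^2)/(m+T)^2 := by
  have d1 : 0 < z+(m+T) := by linarith
  have d2 : 0 < m+T := by linarith
  rw [err_comb μ σ2 _ _ d1, err_comb μ σ2 _ _ d2,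
    div_le_div_iff₀ (by positivity) (by positivity)]
  subst hμ
  have hW := welcomeP k m T q z (by linarith) hmk hT hq (by linarith) hzk
  have := mul_le_mul_of_nonneg_left hW hσ.le
  nlinarith [this]

lemma welcome [DecidableEq ι] (μ σ2 k : ℝ) (n : ι → ℕ) (hσ : 0 < σ2)
    (hμ : μ = 3*σ2*k) (hn : ∀ i, 0 < n i) (C : Finset ι) (z : ι) (hzC : z ∉ C)
    (hzk : (n z : ℝ) ≤ k) (j : ι) (hj : j ∈ C) (hjk : (n j : ℝ) ≤ k) :
    err μ σ2 n (insert z C) j ≤ err μ σ2 n C j := by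
  have hzj : z ≠ j := fun h => hzC (h ▸ hj)
  have hzCj : z ∉ C.erase j := fun h => hzC (Finset.mem_of_mem_erase h)
  have hSC : (∑ i ∈ C, (n i:ℝ)) = (n j:ℝ) + ∑ i ∈ C.erase j, (n i:ℝ) :=
    (Finset.add_sum_erase _ _ hj).symm
  simp only [err, Finset.sum_insert hzC, Finset.erase_insert_of_ne hzj,
    Finset.sum_insert hzCj, hSC]
  exact welcomeR μ σ2 k (n j) (∑ i ∈ C.erase j, (n i:ℝ)) (∑ i ∈ C.erase j, (n i:ℝ)^2)
    (n z) hσ hμ (by exact_mod_cast hn j) hjk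
    (Finset.sum_nonneg fun i _ => by positivity)
    (Finset.sum_nonneg fun i _ => by positivity)
    (by exact_mod_cast hn z) hzk

end AuxiliaryLemmas

/-- Let `A` and `B` be disjoint nonempty coalitions in which every player has at most
`μ_e/(3σ²)` samples, and let `a ∈ A`, `b ∈ B`.  If either `n_a = n_b`, or `n_a > n_b`
and `T_A − n_a ≥ T_B − n_b`, then some player wishes to switch:
`err_a(B ∪ {a}) < err_a(A)` or `err_b(A ∪ {b}) < err_b(B)`.  Consequently (by the
welcoming lemma) no partition containing both `A` and `B` as coalitions is
individually stable. -/
theorem two_small_groups_unstable [DecidableEq ι] [Fintype ι]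
    (μ σ2 : ℝ) (n : ι → ℕ) (hμ : 0 < μ) (hσ : 0 < σ2) (hn : ∀ i, 0 < n i)
    (A B : Finset ι) (hA : A.Nonempty) (hB : B.Nonempty) (hdisj : Disjoint A B)
    (hsmall : ∀ i ∈ A ∪ B, (n i : ℝ) ≤ μ / (3 * σ2))
    (a : ι) (ha : a ∈ A) (b : ι) (hb : b ∈ B)
    (hcase : n a = n b ∨
      (n b < n a ∧
        (∑ i ∈ B, (n i : ℝ)) - (n b : ℝ) ≤ (∑ i ∈ A, (n i : ℝ)) - (n a : ℝ))) :
    (err μ σ2 n (insert a B) a < err μ σ2 n A a ∨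
      err μ σ2 n (insert b A) b < err μ σ2 n B b) ∧
    ∀ P : Finpartition (Finset.univ : Finset ι),
      A ∈ P.parts → B ∈ P.parts → ¬ IndividuallyStable μ σ2 n P := by
  have hμk : μ = 3*σ2*(μ/(3*σ2)) := by field_simp
  have haB : a ∉ B := Finset.disjoint_left.mp hdisj ha
  have hbA : b ∉ A := Finset.disjoint_right.mp hdisj hb
  have hSA : (∑ i ∈ A, (n i:ℝ)) = (n a:ℝ) + ∑ i ∈ A.erase a, (n i:ℝ) :=
    (Finset.add_sum_erase _ _ ha).symm
  have hQA : (∑ i ∈ A, (n i:ℝ)^2) = (n a:ℝ)^2 + ∑ i ∈ A.erase a, (n i:ℝ)^2 :=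
    (Finset.add_sum_erase _ _ ha).symm
  have hSB : (∑ i ∈ B, (n i:ℝ)) = (n b:ℝ) + ∑ i ∈ B.erase b, (n i:ℝ) :=
    (Finset.add_sum_erase _ _ hb).symm
  have hQB : (∑ i ∈ B, (n i:ℝ)^2) = (n b:ℝ)^2 + ∑ i ∈ B.erase b, (n i:ℝ)^2 :=
    (Finset.add_sum_erase _ _ hb).symm
  have e1 : err μ σ2 n (insert a B) a
      = μ/((n a:ℝ)+((n b:ℝ)+∑ i ∈ B.erase b, (n i:ℝ)))
        + σ2*(((n b:ℝ)^2+∑ i ∈ B.erase b, (n i:ℝ)^2)+((n b:ℝ)+∑ i ∈ B.erase b, (n i:ℝ))^2)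
          /((n a:ℝ)+((n b:ℝ)+∑ i ∈ B.erase b, (n i:ℝ)))^2 := by
    simp only [err, Finset.sum_insert haB, Finset.erase_insert haB, hSB, hQB]
  have e2 : err μ σ2 n A a
      = μ/((n a:ℝ)+∑ i ∈ A.erase a, (n i:ℝ))
        + σ2*((∑ i ∈ A.erase a, (n i:ℝ)^2)+(∑ i ∈ A.erase a, (n i:ℝ))^2)
          /((n a:ℝ)+∑ i ∈ A.erase a, (n i:ℝ))^2 := by
    simp only [err, hSA]
  have e3 : err μ σ2 n (insert b A) b
      = μ/((n b:ℝ)+((n a:ℝ)+∑ i ∈ A.erase a, (n i:ℝ)))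
        + σ2*(((n a:ℝ)^2+∑ i ∈ A.erase a, (n i:ℝ)^2)+((n a:ℝ)+∑ i ∈ A.erase a, (n i:ℝ))^2)
          /((n b:ℝ)+((n a:ℝ)+∑ i ∈ A.erase a, (n i:ℝ)))^2 := by
    simp only [err, Finset.sum_insert hbA, Finset.erase_insert hbA, hSA, hQA]
  have e4 : err μ σ2 n B b
      = μ/((n b:ℝ)+∑ i ∈ B.erase b, (n i:ℝ))
        + σ2*((∑ i ∈ B.erase b, (n i:ℝ)^2)+(∑ i ∈ B.erase b, (n i:ℝ))^2)
          /((n b:ℝ)+∑ i ∈ B.erase b, (n i:ℝ))^2 := by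
    simp only [err, hSB]
  have h1a : (1:ℝ) ≤ (n a:ℝ) := by exact_mod_cast hn a
  have h1b : (1:ℝ) ≤ (n b:ℝ) := by exact_mod_cast hn b
  have hak : (n a:ℝ) ≤ μ/(3*σ2) := hsmall a (Finset.mem_union_left _ ha)
  have hbk : (n b:ℝ) ≤ μ/(3*σ2) := hsmall b (Finset.mem_union_right _ hb)
  have ht0 : 0 ≤ ∑ i ∈ B.erase b, (n i:ℝ) := Finset.sum_nonneg fun i _ => by positivity
  have hs0 : 0 ≤ ∑ i ∈ A.erase a, (n i:ℝ) := Finset.sum_nonneg fun i _ => by positivity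
  have hvt : (∑ i ∈ B.erase b, (n i:ℝ)) ≤ ∑ i ∈ B.erase b, (n i:ℝ)^2 :=
    Finset.sum_le_sum fun i _ => by
      have h1 : (1:ℝ) ≤ (n i:ℝ) := by exact_mod_cast hn i
      nlinarith [h1]
  have hus : (∑ i ∈ A.erase a, (n i:ℝ)) ≤ ∑ i ∈ A.erase a, (n i:ℝ)^2 :=
    Finset.sum_le_sum fun i _ => by
      have h1 : (1:ℝ) ≤ (n i:ℝ) := by exact_mod_cast hn i
      nlinarith [h1]
  have hmain : err μ σ2 n (insert a B) a < err μ σ2 n A a ∨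
      err μ σ2 n (insert b A) b < err μ σ2 n B b := by
    rcases hcase with hab | ⟨hba, hts⟩
    · by_cases hst : (∑ i ∈ B.erase b, (n i:ℝ)) ≤ ∑ i ∈ A.erase a, (n i:ℝ)
      · have key := switchR μ σ2 (μ/(3*σ2)) (n a) (n b)
          (∑ i ∈ A.erase a, (n i:ℝ)) (∑ i ∈ B.erase b, (n i:ℝ))
          (∑ i ∈ A.erase a, (n i:ℝ)^2) (∑ i ∈ B.erase b, (n i:ℝ)^2)
          hσ hμk h1b (by exact_mod_cast hab.ge) hak ht0 hst hvt
        rw [← e1, ← e2, ← e3, ← e4] at key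
        exact key
      · have key := switchR μ σ2 (μ/(3*σ2)) (n b) (n a)
          (∑ i ∈ B.erase b, (n i:ℝ)) (∑ i ∈ A.erase a, (n i:ℝ))
          (∑ i ∈ B.erase b, (n i:ℝ)^2) (∑ i ∈ A.erase a, (n i:ℝ)^2)
          hσ hμk h1a (by exact_mod_cast hab.le) hbk hs0 (le_of_not_ge hst) hus
        rw [← e1, ← e2, ← e3, ← e4] at key
        exact key.symm
    · have hts' : (∑ i ∈ B.erase b, (n i:ℝ)) ≤ ∑ i ∈ A.erase a, (n i:ℝ) := by
        rw [hSA, hSB] at hts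
        linarith
      have key := switchR μ σ2 (μ/(3*σ2)) (n a) (n b)
        (∑ i ∈ A.erase a, (n i:ℝ)) (∑ i ∈ B.erase b, (n i:ℝ))
        (∑ i ∈ A.erase a, (n i:ℝ)^2) (∑ i ∈ B.erase b, (n i:ℝ)^2)
        hσ hμk h1b (by exact_mod_cast hba.le) hak ht0 hts' hvt
      rw [← e1, ← e2, ← e3, ← e4] at key
      exact key
  refine ⟨hmain, ?_⟩
  intro P hAP hBP hstab
  have hBA : B ≠ A := by
    rintro rfl
    obtain ⟨i, hi⟩ := hA
    exact (Finset.disjoint_left.mp hdisj hi) hi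
  rcases hmain with hlt | hlt
  · exact (hstab a A hAP ha).2 B hBP hBA ⟨hlt, fun j hj =>
      welcome μ σ2 (μ/(3*σ2)) n hσ hμk hn B a haB hak j hj
        (hsmall j (Finset.mem_union_right _ hj))⟩
  · exact (hstab b B hBP hb).2 A hAP hBA.symm ⟨hlt, fun j hj =>
      welcome μ σ2 (μ/(3*σ2)) n hσ hμk hn A b hbA hbk j hj
        (hsmall j (Finset.mem_union_left _ hj))⟩
end

section
/- Let A and B be disjoint nonempty coalitions in which every player has at most μ_e/(3σ²) samples, let a be a player of maximal size in A and b a player of maximal size in B. If n_a > n_b, T_A − n_a < T_B − n_b, and T_A − n_a ≤ μ_e/(3σ²), then player a strictly prefers to join B: err_a(B ∪ {a}) < err_a(A). -/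
open Finset

variable {ι : Type*}

private lemma err_form_aux (μ σ2 S Q T : ℝ) (hT : T ≠ 0) :
    μ / T + σ2 * (Q + S ^ 2) / T ^ 2 = (μ * T + σ2 * (Q + S ^ 2)) / T ^ 2 := by
  field_simp

/-- Let `A` and `B` be disjoint nonempty coalitions in which every player has at most
`μ_e/(3σ²)` samples, let `a` be a player of maximal size in `A` and `b` a player of
maximal size in `B`.  If `n_a > n_b`, `T_A − n_a < T_B − n_b`, and
`T_A − n_a ≤ μ_e/(3σ²)`, then player `a` strictly prefers to join `B`. -/
theorem largest_player_prefers_other_group [DecidableEq ι]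
    (μ σ2 : ℝ) (n : ι → ℕ) (hμ : 0 < μ) (hσ : 0 < σ2) (hn : ∀ i, 0 < n i)
    (A B : Finset ι) (hA : A.Nonempty) (hB : B.Nonempty) (hdisj : Disjoint A B)
    (hsmall : ∀ i ∈ A ∪ B, (n i : ℝ) ≤ μ / (3 * σ2))
    (a : ι) (ha : a ∈ A) (hamax : ∀ i ∈ A, n i ≤ n a)
    (b : ι) (hb : b ∈ B) (hbmax : ∀ i ∈ B, n i ≤ n b)
    (hab : n b < n a)
    (hT : (∑ i ∈ A, (n i : ℝ)) - (n a : ℝ) < (∑ i ∈ B, (n i : ℝ)) - (n b : ℝ))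
    (hTA : (∑ i ∈ A, (n i : ℝ)) - (n a : ℝ) ≤ μ / (3 * σ2)) :
    err μ σ2 n (insert a B) a < err μ σ2 n A a := by
  classical
  have haB : a ∉ B := fun h => (Finset.disjoint_left.mp hdisj ha h)
  set x : ℝ := ∑ i ∈ A.erase a, (n i : ℝ) with hxdef
  set QA : ℝ := ∑ i ∈ A.erase a, (n i : ℝ) ^ 2 with hQAdef
  set TB : ℝ := ∑ i ∈ B, (n i : ℝ) with hTBdef
  set QB : ℝ := ∑ i ∈ B, (n i : ℝ) ^ 2 with hQBdef
  have hsumA : ∑ i ∈ A, (n i : ℝ) = x + (n a : ℝ) := by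
    rw [hxdef, Finset.sum_erase_add A _ ha]
  have hsumB : ∑ i ∈ insert a B, (n i : ℝ) = TB + (n a : ℝ) := by
    rw [Finset.sum_insert haB]; ring
  have herase : (insert a B).erase a = B := Finset.erase_insert haB
  have hx0 : 0 ≤ x := Finset.sum_nonneg fun i _ => by positivity
  have hQA0 : 0 ≤ QA := Finset.sum_nonneg fun i _ => by positivity
  have hna1 : (1 : ℝ) ≤ (n a : ℝ) := by exact_mod_cast hn a
  have hnb1 : (1 : ℝ) ≤ (n b : ℝ) := by exact_mod_cast hn b
  have hnab : (n b : ℝ) < (n a : ℝ) := by exact_mod_cast hab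
  have hT1 : 0 < x + (n a : ℝ) := by linarith
  have h1 : x + (n b : ℝ) < TB := by
    rw [hsumA] at hT; linarith
  have hT2 : 0 < TB + (n a : ℝ) := by linarith
  have hQB : QB ≤ (n b : ℝ) * TB := by
    rw [hQBdef, hTBdef, Finset.mul_sum]
    refine Finset.sum_le_sum fun i hi => ?_
    have h : (n i : ℝ) ≤ (n b : ℝ) := by exact_mod_cast hbmax i hi
    have h0 : (0 : ℝ) ≤ (n i : ℝ) := by positivity
    nlinarith
  have hsa : 3 * σ2 * (n a : ℝ) ≤ μ := by
    have := hsmall a (Finset.mem_union_left _ ha)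
    rw [le_div_iff₀ (by positivity)] at this
    linarith
  have hsx : 3 * σ2 * x ≤ μ := by
    rw [hsumA] at hTA
    have hx : x ≤ μ / (3 * σ2) := by linarith
    rw [le_div_iff₀ (by positivity)] at hx
    linarith
  have t1 : 0 ≤ σ2 * QA * (TB + (n a : ℝ)) ^ 2 := by positivity
  have t2 : 0 ≤ σ2 * ((n b : ℝ) * TB - QB) * (x + (n a : ℝ)) ^ 2 :=
    mul_nonneg (mul_nonneg hσ.le (by linarith)) (by positivity)
  have t3 : 0 ≤ (μ - σ2 * (2 * (n a : ℝ) + x)) *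
      ((x + (n a : ℝ)) * ((TB + (n a : ℝ)) * (TB - x))) :=
    mul_nonneg (by linarith) (mul_nonneg hT1.le (mul_nonneg hT2.le (by linarith)))
  have t4 : 0 ≤ σ2 * x * ((x + (n a : ℝ)) * ((TB + (n a : ℝ)) * (TB - x - (n b : ℝ)))) :=
    mul_nonneg (mul_nonneg hσ.le hx0)
      (mul_nonneg hT1.le (mul_nonneg hT2.le (by linarith)))
  have t5 : 0 < σ2 * ((n a : ℝ) * ((TB - x) *
      ((n a : ℝ) * (TB + (n a : ℝ)) + (x + (n a : ℝ)) * ((n a : ℝ) - (n b : ℝ))))) := by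
    have h5a : 0 < (x + (n a : ℝ)) * ((n a : ℝ) - (n b : ℝ)) := mul_pos hT1 (by linarith)
    have h5b : 0 < (n a : ℝ) * (TB + (n a : ℝ)) := mul_pos (by linarith) hT2
    exact mul_pos hσ (mul_pos (by linarith) (mul_pos (by linarith) (by linarith)))
  have key : (μ * (TB + (n a : ℝ)) + σ2 * (QB + TB ^ 2)) * (x + (n a : ℝ)) ^ 2 <
      (μ * (x + (n a : ℝ)) + σ2 * (QA + x ^ 2)) * (TB + (n a : ℝ)) ^ 2 := by
    nlinarith [t1, t2, t3, t4, t5]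
  have e1 : err μ σ2 n (insert a B) a =
      (μ * (TB + (n a : ℝ)) + σ2 * (QB + TB ^ 2)) / (TB + (n a : ℝ)) ^ 2 := by
    rw [err, herase, hsumB, ← hQBdef, ← hTBdef]
    exact err_form_aux _ _ _ _ _ hT2.ne'
  have e2 : err μ σ2 n A a =
      (μ * (x + (n a : ℝ)) + σ2 * (QA + x ^ 2)) / (x + (n a : ℝ)) ^ 2 := by
    rw [err, hsumA, ← hQAdef, ← hxdef]
    exact err_form_aux _ _ _ _ _ hT1.ne'
  rw [e1, e2]
  exact (div_lt_div_iff₀ (by positivity) (by positivity)).mpr key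
end
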